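/- arXiv:1605.07126 — 9 statements merged into one kernel-verified Lean document; each statement's English description precedes it below -/
import Mathlib

section
/- Let (G, <) be an ordered nilpotent group of class 2 and let S = {x_1, ..., x_k} be a subset of G with x_1 < x_2 < ... < x_k and k ≥ 3. If x_k and x_{k-1} do not commute, then |S²| ≥ |T²| + 4, where T = {x_1, ..., x_{k-1}} and S² = {st : s, t ∈ S}. -/
open Pointwise
open scoped commutatorElement

private lemma sq_eq_one_aux {G : Type*} [Group G] [LinearOrder G]
    [CovariantClass G G (· * ·) (· < ·)] {g : G} (h : g * g = 1) : g = 1 := by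
  rcases lt_trichotomy g 1 with hlt | heq | hgt
  · have h2 : g * g < g * 1 := mul_lt_mul_right hlt g
    rw [h, mul_one] at h2
    exact absurd h2 (lt_asymm hlt)
  · exact heq
  · have h2 : g * 1 < g * g := mul_lt_mul_right hgt g
    rw [h, mul_one] at h2
    exact absurd h2 (lt_asymm hgt)

private lemma key_lemma {G : Type*} [Group G] [LinearOrder G]
    [CovariantClass G G (· * ·) (· < ·)]
    [CovariantClass G G (Function.swap (· * ·)) (· < ·)]
    (hG : ∀ x y : G, ⁅x, y⁆ ∈ Subgroup.center G)
    {a b c : G} (hcb : c < b) (hba : b < a) (hnc : a * b ≠ b * a) :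
    (max (b*c) (c*b) < a*c ∧ a*c ≠ b*b ∧ a*c ≠ b*a) ∨
    (max (b*c) (c*b) < c*a ∧ c*a ≠ b*b ∧ c*a ≠ a*b) := by
  haveI : CovariantClass G G (· * ·) (· ≤ ·) := covariantClass_le_of_lt _ _ _
  haveI : CovariantClass G G (Function.swap (· * ·)) (· ≤ ·) := covariantClass_le_of_lt _ _ _
  by_cases Hac : a*c ≤ c*b ∨ a*c = b*b ∨ a*c = b*a
  · right
    by_cases Hca : c*a ≤ b*c ∨ c*a = b*b ∨ c*a = a*b
    · exfalso
      obtain ⟨z, hz_eq, hzc⟩ : ∃ z : G, a*b = z*(b*a) ∧ ∀ g : G, g*z = z*g :=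
        ⟨⁅a,b⁆, by rw [commutatorElement_def]; group,
          fun g => Subgroup.mem_center_iff.1 (hG a b) g⟩
      obtain ⟨r, hr_eq, hrc⟩ : ∃ r : G, b*c = r*(c*b) ∧ ∀ g : G, g*r = r*g :=
        ⟨⁅b,c⁆, by rw [commutatorElement_def]; group,
          fun g => Subgroup.mem_center_iff.1 (hG b c) g⟩
      have hzc2 : ∀ g h : G, g*(z*h) = z*(g*h) := fun g h => by
        rw [← mul_assoc, hzc g, mul_assoc]
      have hrc2 : ∀ g h : G, g*(r*h) = r*(g*h) := fun g h => by
        rw [← mul_assoc, hrc g, mul_assoc]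
      have hz1 : z ≠ 1 := by
        intro h; rw [h, one_mul] at hz_eq; exact hnc hz_eq
      have cancelL : ∀ {p q : G} (g : G), g*p ≤ g*q → p ≤ q := by
        intro p q g h
        have h2 := mul_le_mul_right h g⁻¹
        simpa using h2
      have cancelR : ∀ {p q : G} (g : G), p*g ≤ q*g → p ≤ q := by
        intro p q g h
        have h2 := mul_le_mul_left h g⁻¹
        simpa [mul_assoc] using h2
      have cancelLlt : ∀ {p q : G} (g : G), g*p < g*q → p < q := by
        intro p q g h
        have h2 := mul_lt_mul_right h g⁻¹
        simpa using h2
      have cancelRlt : ∀ {p q : G} (g : G), p*g < q*g → p < q := by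
        intro p q g h
        have h2 := mul_lt_mul_left h g⁻¹
        simpa [mul_assoc] using h2
      rcases Hac with h1 | h1 | h1 <;> rcases Hca with h2 | h2 | h2
      -- case A : a*c ≤ c*b, c*a ≤ b*c
      · have p1 : b*c < a*c := mul_lt_mul_left hba c
        have p2 : c*b < c*a := mul_lt_mul_right hba c
        exact absurd ((p1.trans_le h1).trans (p2.trans_le h2)) (lt_irrefl (b*c))
      -- case B : a*c ≤ c*b, c*a = b*b
      · have s1 : (b*b)*c ≤ c*(c*b) := by
          have hh := mul_le_mul_right h1 c
          calc (b*b)*c = (c*a)*c := by rw [h2]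
          _ = c*(a*c) := mul_assoc _ _ _
          _ ≤ c*(c*b) := hh
        have e1 : b*(c*c) = r*(r*(c*(c*b))) := by
          calc b*(c*c) = (b*c)*c := (mul_assoc b c c).symm
          _ = (r*(c*b))*c := by rw [hr_eq]
          _ = r*(c*(b*c)) := by simp only [mul_assoc]
          _ = r*(c*(r*(c*b))) := by rw [hr_eq]
          _ = r*(r*(c*(c*b))) := by rw [hrc2 c (c*b)]
        have e2 : b*(r*(r*(b*c))) = r*(r*((b*b)*c)) := by
          simp only [mul_assoc, hrc2]
        have s2 : r*(r*((b*b)*c)) ≤ r*(r*(c*(c*b))) :=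
          mul_le_mul_right (mul_le_mul_right s1 r) r
        have s2' : b*(r*(r*(b*c))) ≤ b*(c*c) := by
          rw [e2, e1]; exact s2
        have s3 : r*(r*(b*c)) ≤ c*c := cancelL b s2'
        have e3 : c*(r*(r*(r*b))) = r*(r*(b*c)) := by
          rw [hr_eq]; simp only [hrc2]
        have s4 : c*(r*(r*(r*b))) ≤ c*c := by rw [e3]; exact s3
        have s5 : r*(r*(r*b)) ≤ c := cancelL c s4
        -- other side
        have q1 : c*b < b*b := mul_lt_mul_left hcb b
        have q2 : b*c < b*(r*b) := by
          calc b*c = r*(c*b) := hr_eq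
          _ < r*(b*b) := mul_lt_mul_right q1 r
          _ = b*(r*b) := by simp only [hrc2]
        have t1 : c < r*b := cancelLlt b q2
        have q3 : b*c < b*(r*(r*b)) := by
          calc b*c = r*(c*b) := hr_eq
          _ < r*((r*b)*b) := mul_lt_mul_right (mul_lt_mul_left t1 b) r
          _ = b*(r*(r*b)) := by simp only [mul_assoc, hrc2]
        have t2 : c < r*(r*b) := cancelLlt b q3
        have q4 : b*c < b*(r*(r*(r*b))) := by
          calc b*c = r*(c*b) := hr_eq
          _ < r*((r*(r*b))*b) := mul_lt_mul_right (mul_lt_mul_left t2 b) r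
          _ = b*(r*(r*(r*b))) := by simp only [mul_assoc, hrc2]
        have t3 : c < r*(r*(r*b)) := cancelLlt b q4
        exact absurd (s5.trans_lt t3) (lt_irrefl _)
      -- case C : a*c ≤ c*b, c*a = a*b
      · have hc_zb : c = z*b := by
          have e : c*a = (z*b)*a := by rw [h2, hz_eq, ← mul_assoc]
          exact mul_right_cancel e
        have hbc_cb : b*c = c*b := by
          rw [hc_zb]; simp only [mul_assoc, hzc2]
        have p1 : b*c < a*c := mul_lt_mul_left hba c
        exact absurd (p1.trans_le (h1.trans_eq hbc_cb.symm)) (lt_irrefl _)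
      -- case D : a*c = b*b, c*a ≤ b*c
      · have s1 : c*(b*b) ≤ (b*c)*c := by
          calc c*(b*b) = c*(a*c) := by rw [h1]
          _ = (c*a)*c := (mul_assoc _ _ _).symm
          _ ≤ (b*c)*c := mul_le_mul_left h2 c
        have e1 : (b*c)*c = c*(r*(r*(c*b))) := by
          rw [hr_eq]; simp only [mul_assoc]; rw [hr_eq]; simp only [hrc2]
        have s2 : c*(b*b) ≤ c*(r*(r*(c*b))) := s1.trans_eq e1
        have s3 : b*b ≤ r*(r*(c*b)) := cancelL c s2
        have e2 : r*(r*(c*b)) = (r*(r*c))*b := by simp only [mul_assoc]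
        have s4 : b ≤ r*(r*c) := cancelR b (s3.trans_eq e2)
        have q1 : (r*c)*b < b*b := by
          calc (r*c)*b = r*(c*b) := mul_assoc r c b
          _ = b*c := hr_eq.symm
          _ < b*b := mul_lt_mul_right hcb b
        have u1 : r*c < b := cancelRlt b q1
        have q4 : (r*(r*c))*c < b*c := by
          calc (r*(r*c))*c = r*(c*(r*c)) := by simp only [mul_assoc, hrc2]
          _ < r*(c*b) := mul_lt_mul_right (mul_lt_mul_right u1 c) r
          _ = b*c := hr_eq.symm
        have u2 : r*(r*c) < b := cancelRlt c q4
        exact absurd (s4.trans_lt u2) (lt_irrefl _)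
      -- case E : a*c = b*b, c*a = b*b
      · have s1 : c*(b*b) = (b*b)*c := by
          calc c*(b*b) = c*(a*c) := by rw [h1]
          _ = (c*a)*c := (mul_assoc _ _ _).symm
          _ = (b*b)*c := by rw [h2]
        have e1 : (b*b)*c = (r*r)*(c*(b*b)) := by
          calc (b*b)*c = b*(b*c) := mul_assoc _ _ _
          _ = b*(r*(c*b)) := by rw [hr_eq]
          _ = r*(b*(c*b)) := by rw [hrc2 b (c*b)]
          _ = r*((b*c)*b) := by rw [← mul_assoc b c b]
          _ = r*((r*(c*b))*b) := by rw [hr_eq]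
          _ = r*(r*((c*b)*b)) := by rw [mul_assoc r (c*b) b]
          _ = r*(r*(c*(b*b))) := by rw [mul_assoc c b b]
          _ = (r*r)*(c*(b*b)) := (mul_assoc r r _).symm
        have s2 : (1:G)*(c*(b*b)) = (r*r)*(c*(b*b)) := by
          calc (1:G)*(c*(b*b)) = (b*b)*c := by rw [one_mul, s1]
          _ = (r*r)*(c*(b*b)) := e1
        have hr1 : r = 1 := sq_eq_one_aux (mul_right_cancel s2).symm
        have hcomm : b*c = c*b := by
          have := hr_eq; rw [hr1, one_mul] at this; exact this
        have w1 : (a*b)*c = (b*a)*c := by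
          calc (a*b)*c = a*(b*c) := mul_assoc _ _ _
          _ = a*(c*b) := by rw [hcomm]
          _ = (a*c)*b := (mul_assoc _ _ _).symm
          _ = (b*b)*b := by rw [h1]
          _ = b*(b*b) := mul_assoc _ _ _
          _ = b*(a*c) := by rw [h1]
          _ = (b*a)*c := (mul_assoc _ _ _).symm
        exact hnc (mul_right_cancel w1)
      -- case F : a*c = b*b, c*a = a*b
      · have hc_zb : c = z*b := by
          have e : c*a = (z*b)*a := by rw [h2, hz_eq, ← mul_assoc]
          exact mul_right_cancel e
        have e2 : z*(a*b) = b*b := by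
          calc z*(a*b) = a*(z*b) := (hzc2 a b).symm
          _ = a*c := by rw [hc_zb]
          _ = b*b := h1
        have e3 : a*b = (z⁻¹*b)*b := by
          rw [mul_assoc, ← e2]; simp
        have ha : a = z⁻¹*b := mul_right_cancel e3
        have hzinv : ∀ g : G, g*z⁻¹ = z⁻¹*g := by
          intro g
          have hgz := hzc g
          calc g*z⁻¹ = (z⁻¹*z)*(g*z⁻¹) := by simp
          _ = z⁻¹*((z*g)*z⁻¹) := by simp only [mul_assoc]
          _ = z⁻¹*((g*z)*z⁻¹) := by rw [hgz]
          _ = z⁻¹*g := by simp [mul_assoc]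
        have : a*b = b*a := by
          rw [ha]
          symm
          calc b*(z⁻¹*b) = (b*z⁻¹)*b := (mul_assoc _ _ _).symm
          _ = (z⁻¹*b)*b := by rw [hzinv b]
        exact hnc this
      -- case G : a*c = b*a, c*a ≤ b*c
      · have hb_zc : b = z*c := by
          have e : a*b = a*(z*c) := by
            calc a*b = z*(b*a) := hz_eq
            _ = z*(a*c) := by rw [h1]
            _ = a*(z*c) := (hzc2 a c).symm
          exact mul_left_cancel e
        have hbc_cb : b*c = c*b := by
          rw [hb_zc]; simp only [mul_assoc, hzc2]
        have p2 : c*b < c*a := mul_lt_mul_right hba c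
        exact absurd (p2.trans_le (h2.trans_eq hbc_cb)) (lt_irrefl _)
      -- case H : a*c = b*a, c*a = b*b
      · have hb_zc : b = z*c := by
          have e : a*b = a*(z*c) := by
            calc a*b = z*(b*a) := hz_eq
            _ = z*(a*c) := by rw [h1]
            _ = a*(z*c) := (hzc2 a c).symm
          exact mul_left_cancel e
        have e1 : c*a = c*(z*(z*c)) := by
          rw [h2, hb_zc]; simp only [mul_assoc, hzc2]
        have ha : a = z*(z*c) := mul_left_cancel e1
        have ha' : a = z*b := by rw [hb_zc]; exact ha
        exact hnc (by rw [ha']; simp only [mul_assoc, hzc2])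
      -- case I : a*c = b*a, c*a = a*b
      · have hb_zc : b = z*c := by
          have e : a*b = a*(z*c) := by
            calc a*b = z*(b*a) := hz_eq
            _ = z*(a*c) := by rw [h1]
            _ = a*(z*c) := (hzc2 a c).symm
          exact mul_left_cancel e
        have hc_zb : c = z*b := by
          have e : c*a = (z*b)*a := by rw [h2, hz_eq, ← mul_assoc]
          exact mul_right_cancel e
        have s : (1:G)*b = (z*z)*b := by
          calc (1:G)*b = b := one_mul b
          _ = z*c := hb_zc
          _ = z*(z*b) := by rw [hc_zb]
          _ = (z*z)*b := (mul_assoc _ _ _).symm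
        exact hz1 (sq_eq_one_aux (mul_right_cancel s).symm)
    · push_neg at Hca
      exact ⟨max_lt Hca.1 (mul_lt_mul_right hba c), Hca.2.1, Hca.2.2⟩
  · left
    push_neg at Hac
    exact ⟨max_lt (mul_lt_mul_left hba c) Hac.1, Hac.2.1, Hac.2.2⟩

/-- Lemma 2.1: In an ordered nilpotent group of class 2, if the top two elements
of a strictly increasing finite set `S = {x 0 < ... < x (k-1)}` (with `k ≥ 3`) do not
commute, then `|S²| ≥ |T²| + 4` where `T` consists of the first `k-1` elements. -/
theorem stmt_0 {G : Type*} [Group G] [LinearOrder G]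
    [CovariantClass G G (· * ·) (· < ·)]
    [CovariantClass G G (Function.swap (· * ·)) (· < ·)]
    (hG : ∀ x y : G, ⁅x, y⁆ ∈ Subgroup.center G)
    (k : ℕ) (hk : 3 ≤ k) (x : ℕ → G)
    (hmono : ∀ i j : ℕ, i < j → j < k → x i < x j)
    (hnc : x (k - 1) * x (k - 2) ≠ x (k - 2) * x (k - 1))
    (S T : Finset G)
    (hS : S = (Finset.range k).image x)
    (hT : T = (Finset.range (k - 1)).image x) :
    (T * T).card + 4 ≤ (S * S).card := by
  haveI : CovariantClass G G (· * ·) (· ≤ ·) := covariantClass_le_of_lt _ _ _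
  haveI : CovariantClass G G (Function.swap (· * ·)) (· ≤ ·) := covariantClass_le_of_lt _ _ _
  set a := x (k-1) with hadef
  set b := x (k-2) with hbdef
  set c := x (k-3) with hcdef
  have hba : b < a := hmono _ _ (by omega) (by omega)
  have hcb : c < b := hmono _ _ (by omega) (by omega)
  have haS : a ∈ S := by
    rw [hS, hadef]; exact Finset.mem_image_of_mem x (Finset.mem_range.2 (by omega))
  have hbT : b ∈ T := by
    rw [hT, hbdef]; exact Finset.mem_image_of_mem x (Finset.mem_range.2 (by omega))
  have hcT : c ∈ T := by
    rw [hT, hcdef]; exact Finset.mem_image_of_mem x (Finset.mem_range.2 (by omega))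
  have hTS : T ⊆ S := by
    rw [hS, hT]; exact Finset.image_subset_image (Finset.range_subset_range.2 (by omega))
  have hTle : ∀ u ∈ T, u ≤ b := by
    intro u hu; rw [hT] at hu
    obtain ⟨i, hi, rfl⟩ := Finset.mem_image.1 hu
    rw [Finset.mem_range] at hi
    rcases eq_or_lt_of_le (by omega : i ≤ k-2) with h | h
    · exact le_of_eq (by rw [h])
    · exact (hmono i (k-2) h (by omega)).le
  have hTbc : ∀ u ∈ T, u = b ∨ u ≤ c := by
    intro u hu; rw [hT] at hu
    obtain ⟨i, hi, rfl⟩ := Finset.mem_image.1 hu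
    rw [Finset.mem_range] at hi
    by_cases hb2 : i = k-2
    · left; rw [hb2]
    · right
      rcases eq_or_lt_of_le (by omega : i ≤ k-3) with h | h
      · exact le_of_eq (by rw [h])
      · exact (hmono i (k-3) h (by omega)).le
  obtain ⟨w, hw_mem, hwM, hwne⟩ :
      ∃ w, w ∈ S*S ∧ max (b*c) (c*b) < w ∧
        (w ≠ b*b ∧ w ≠ a*b ∧ w ≠ b*a ∧ w ≠ a*a) := by
    rcases key_lemma hG hcb hba hnc with ⟨h1, h2, h3⟩ | ⟨h1, h2, h3⟩
    · refine ⟨a*c, Finset.mul_mem_mul haS (hTS hcT), h1, h2, ?_, h3, ?_⟩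
      · exact fun h => hcb.ne (mul_left_cancel h)
      · exact fun h => (hcb.trans hba).ne (mul_left_cancel h)
    · refine ⟨c*a, Finset.mul_mem_mul (hTS hcT) haS, h1, h2, h3, ?_, ?_⟩
      · exact fun h => hcb.ne (mul_right_cancel h)
      · exact fun h => (hcb.trans hba).ne (mul_right_cancel h)
  set M := max (b*c) (c*b) with hM
  have hMbb : M < b*b := max_lt (mul_lt_mul_right hcb b) (mul_lt_mul_left hcb b)
  have hbbab : b*b < a*b := mul_lt_mul_left hba b
  have hbbba : b*b < b*a := mul_lt_mul_right hba b
  have habaa : a*b < a*a := mul_lt_mul_right hba a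
  have hbaaa : b*a < a*a := mul_lt_mul_left hba a
  classical
  set U : Finset G := insert (b*b) (insert (a*b) (insert (b*a) (insert (a*a) {w}))) with hU
  have hUcard : U.card = 5 := by
    have d1 : b*b ≠ a*b := ne_of_lt hbbab
    have d2 : b*b ≠ b*a := ne_of_lt hbbba
    have d3 : b*b ≠ a*a := ne_of_lt (hbbab.trans habaa)
    have d4 : b*b ≠ w := fun h => hwne.1 h.symm
    have d5 : a*b ≠ b*a := hnc
    have d6 : a*b ≠ a*a := ne_of_lt habaa
    have d7 : a*b ≠ w := fun h => hwne.2.1 h.symm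
    have d8 : b*a ≠ a*a := ne_of_lt hbaaa
    have d9 : b*a ≠ w := fun h => hwne.2.2.1 h.symm
    have d10 : a*a ≠ w := fun h => hwne.2.2.2 h.symm
    rw [hU,
      Finset.card_insert_of_notMem (by simp [d1, d2, d3, d4]),
      Finset.card_insert_of_notMem (by simp [d5, d6, d7]),
      Finset.card_insert_of_notMem (by simp [d8, d9]),
      Finset.card_insert_of_notMem (by simp [d10]),
      Finset.card_singleton]
  have hUsub : U ⊆ S*S := by
    intro u hu
    rw [hU] at hu
    simp only [Finset.mem_insert, Finset.mem_singleton] at hu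
    have hbS : b ∈ S := hTS hbT
    rcases hu with rfl | rfl | rfl | rfl | rfl
    · exact Finset.mul_mem_mul hbS hbS
    · exact Finset.mul_mem_mul haS hbS
    · exact Finset.mul_mem_mul hbS haS
    · exact Finset.mul_mem_mul haS haS
    · exact hw_mem
  have hUgt : ∀ u ∈ U, M < u := by
    intro u hu
    rw [hU] at hu
    simp only [Finset.mem_insert, Finset.mem_singleton] at hu
    rcases hu with rfl | rfl | rfl | rfl | rfl
    · exact hMbb
    · exact hMbb.trans hbbab
    · exact hMbb.trans hbbba
    · exact hMbb.trans (hbbab.trans habaa)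
    · exact hwM
  set A : Finset G := (T*T).filter (fun u => u ≤ M) with hA
  have hTTA : T*T ⊆ insert (b*b) A := by
    intro u hu
    obtain ⟨p, hp, q, hq, rfl⟩ := Finset.mem_mul.1 hu
    rcases hTbc p hp with hpb | hpc
    · rcases hTbc q hq with hqb | hqc
      · rw [hpb, hqb]; exact Finset.mem_insert_self _ _
      · refine Finset.mem_insert_of_mem (Finset.mem_filter.2 ⟨hu, ?_⟩)
        calc p*q ≤ p*c := mul_le_mul_right hqc p
        _ = b*c := by rw [hpb]
        _ ≤ M := le_max_left _ _
    · refine Finset.mem_insert_of_mem (Finset.mem_filter.2 ⟨hu, ?_⟩)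
      calc p*q ≤ c*q := mul_le_mul_left hpc q
      _ ≤ c*b := mul_le_mul_right (hTle q hq) c
      _ ≤ M := le_max_right _ _
  have hTT_card : (T*T).card ≤ A.card + 1 :=
    (Finset.card_le_card hTTA).trans (Finset.card_insert_le _ _)
  have hdisj : Disjoint A U := by
    rw [Finset.disjoint_left]
    intro u huA huU
    exact absurd ((Finset.mem_filter.1 huA).2) (not_le.2 (hUgt u huU))
  have hAUsub : A ∪ U ⊆ S*S :=
    Finset.union_subset ((Finset.filter_subset _ _).trans (Finset.mul_subset_mul hTS hTS)) hUsub
  calc (T*T).card + 4 ≤ (A.card + 1) + 4 := by omega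
  _ = A.card + U.card := by rw [hUcard]
  _ = (A ∪ U).card := (Finset.card_union_of_disjoint hdisj).symm
  _ ≤ (S*S).card := Finset.card_le_card hAUsub
end

section
/- Let S be a finite subset of size k of an ordered nilpotent group of class 2 such that no two distinct elements of S commute (S is completely-non-abelian). Then |S²| ≥ 4k - 4. -/
open Pointwise
open scoped commutatorElement

section AuxCNA

variable {G : Type*} [Group G]

private lemma commCentral (hG : ∀ x y : G, ⁅x, y⁆ ∈ Subgroup.center G) (a c g : G) :
    Commute ⁅a, c⁆ g :=
  (Subgroup.mem_center_iff.mp (hG a c) g).symm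

/-- In a class-2 group, `a * b = c * a` forces `b` and `c` to commute. -/
private lemma lemA (hG : ∀ x y : G, ⁅x, y⁆ ∈ Subgroup.center G) {a b c : G}
    (h : a * b = c * a) : b * c = c * b := by
  have hz := commCentral hG a c
  have key : ⁅a, c⁆ * (c * a) = a * c := by
    rw [commutatorElement_def]; group
  have hb : b = ⁅a, c⁆⁻¹ * c := by
    apply mul_left_cancel (a := a)
    rw [h, ← mul_assoc, ← (hz a).inv_left.eq, mul_assoc, ← key, inv_mul_cancel_left]
  rw [hb]
  exact ((hz c).inv_left.mul_left (Commute.refl c)).eq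

/-- Conflict lemma: `p*r = s*q` and `r*p = q*q` force `q` and `s` to commute. -/
private lemma lemF3 (hG : ∀ x y : G, ⁅x, y⁆ ∈ Subgroup.center G) {p q r s : G}
    (h1 : p * r = s * q) (h2 : r * p = q * q) : q * s = s * q := by
  have hz := commCentral hG p r
  have key : p * r = ⁅p, r⁆ * (r * p) := by
    rw [commutatorElement_def]; group
  have hs : s = ⁅p, r⁆ * q := by
    apply mul_right_cancel (b := q)
    rw [← h1, key, h2, mul_assoc]
  rw [hs]
  exact ((hz q).symm.mul_right (Commute.refl q)).eq

/-- Conflict lemma: `p*r = q*q` and `r*p = q*s` force `q` and `s` to commute. -/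
private lemma lemF4 (hG : ∀ x y : G, ⁅x, y⁆ ∈ Subgroup.center G) {p q r s : G}
    (h1 : p * r = q * q) (h2 : r * p = q * s) : q * s = s * q := by
  have hz := commCentral hG r p
  have key : r * p = ⁅r, p⁆ * (p * r) := by
    rw [commutatorElement_def]; group
  have hs0 : q * s = ⁅r, p⁆ * q * q := by
    rw [← h2, key, h1, mul_assoc]
  rw [(hz q).eq, mul_assoc] at hs0
  have hs := mul_left_cancel hs0
  rw [hs]
  exact ((hz q).symm.mul_right (Commute.refl q)).eq

variable [LinearOrder G]

/-- The chosen "skip" element of the window `[t, t+2]`. -/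
private def sigElt (y : ℕ → G) (t : ℕ) : G :=
  if y t * y (t + 2) = y (t + 3) * y (t + 1) then y (t + 2) * y t
  else if y t * y (t + 2) = y (t + 1) * y (t + 1) then y (t + 2) * y t
  else y t * y (t + 2)

variable [CovariantClass G G (· * ·) (· < ·)]
  [CovariantClass G G (Function.swap (· * ·)) (· < ·)]

private theorem auxT (hG : ∀ x y : G, ⁅x, y⁆ ∈ Subgroup.center G) (k : ℕ) (hk : 2 ≤ k)
    (y : ℕ → G)
    (hlt : ∀ i j, i < j → j < k → y i < y j)
    (hle : ∀ i j, i ≤ j → y i ≤ y j)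
    (hclamp : ∀ i, k - 1 ≤ i → y i = y (k - 1))
    (hcomm : ∀ i j, i < k → j < k → i ≠ j → y i * y j ≠ y j * y i) :
    ∃ T : Finset G, 4 * k - 4 ≤ T.card ∧ ∀ g ∈ T, ∃ i j, i < k ∧ j < k ∧ g = y i * y j := by
  haveI : CovariantClass G G (· * ·) (· ≤ ·) := covariantClass_le_of_lt _ _ _
  haveI : CovariantClass G G (Function.swap (· * ·)) (· ≤ ·) := covariantClass_le_of_lt _ _ _
  have hmm : ∀ {a b c d : G}, a < b → c < d → a * c < b * d := fun h1 h2 =>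
    (mul_lt_mul_left h1 _).trans (mul_lt_mul_right h2 _)
  have hml : ∀ {a b c d : G}, a < b → c ≤ d → a * c < b * d := fun h1 h2 =>
    lt_of_lt_of_le (mul_lt_mul_left h1 _) (mul_le_mul_right h2 _)
  have hlm : ∀ {a b c d : G}, a ≤ b → c < d → a * c < b * d := fun h1 h2 =>
    lt_of_le_of_lt (mul_le_mul_left h1 _) (mul_lt_mul_right h2 _)
  -- basic facts about sigElt
  have hsig_spec : ∀ t, sigElt y t = y (t + 2) * y t ∨ sigElt y t = y t * y (t + 2) := by
    intro t; unfold sigElt; split_ifs <;> simp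
  have hsig_lb : ∀ t, t + 2 < k → y t * y t < sigElt y t := by
    intro t ht
    rcases hsig_spec t with h | h <;> rw [h]
    · exact mul_lt_mul_left (hlt t (t + 2) (by omega) ht) _
    · exact mul_lt_mul_right (hlt t (t + 2) (by omega) ht) _
  have hsig_ub : ∀ t, t + 2 < k → sigElt y t < y (t + 2) * y (t + 2) := by
    intro t ht
    rcases hsig_spec t with h | h <;> rw [h]
    · exact mul_lt_mul_right (hlt t (t + 2) (by omega) ht) _
    · exact mul_lt_mul_left (hlt t (t + 2) (by omega) ht) _
  have hsig_ne_sq : ∀ t, t + 2 < k → sigElt y t ≠ y (t + 1) * y (t + 1) := by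
    intro t ht
    unfold sigElt
    split_ifs with h1 h2
    · intro h'
      by_cases h3 : t + 3 < k
      · exact hcomm (t + 1) (t + 3) (by omega) h3 (by omega) (lemF3 hG h1 h')
      · have e3 : y (t + 3) = y (t + 2) := by
          rw [hclamp (t + 3) (by omega), hclamp (t + 2) (by omega)]
        rw [e3] at h1
        exact hcomm (t + 1) t (by omega) (by omega) (by omega) (lemA hG h1.symm)
    · intro h'
      exact hcomm t (t + 2) (by omega) ht (by omega) (h2.trans h'.symm)
    · exact h2
  have hsig_ne_adj : ∀ t, t + 3 < k → sigElt y t ≠ sigElt y (t + 1) := by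
    intro t ht
    have hpq : y t < y (t + 1) := hlt t (t + 1) (by omega) (by omega)
    have hrs : y (t + 2) < y (t + 3) := hlt (t + 2) (t + 3) (by omega) ht
    rcases hsig_spec (t + 1) with hv | hv <;> rw [hv] <;> unfold sigElt <;>
        split_ifs with h1 h2
    -- value of sig (t+1) is y (t+3) * y (t+1)
    · exact (hmm hrs hpq).ne
    · exact (hmm hrs hpq).ne
    · exact h1
    -- value of sig (t+1) is y (t+1) * y (t+3)
    · intro he
      have hA : y (t + 3) * y (t + 1) < y t * y (t + 3) := by
        rw [← h1]; exact mul_lt_mul_right hrs _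
      have hB : y (t + 3) * y t < y (t + 3) * y (t + 1) := mul_lt_mul_right hpq _
      have hC : y (t + 3) * y t < y t * y (t + 3) := hB.trans hA
      have hD : y (t + 1) * y (t + 3) < y (t + 3) * y t := by
        rw [← he]; exact mul_lt_mul_left hrs _
      have hE : y t * y (t + 3) < y (t + 1) * y (t + 3) := mul_lt_mul_left hpq _
      exact absurd (hE.trans hD) (lt_asymm hC)
    · intro he
      exact hcomm (t + 1) (t + 3) (by omega) ht (by omega) (lemF4 hG h2 he)
    · exact (hmm hpq hrs).ne
  have hsig_ne_m : ∀ t, t + 2 < k → sigElt y t ≠ y t * y (t + 1) := by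
    intro t ht
    rcases hsig_spec t with h | h <;> rw [h]
    · intro he
      exact hcomm (t + 1) (t + 2) (by omega) ht (by omega) (lemA hG he.symm)
    · exact (mul_lt_mul_right (hlt (t + 1) (t + 2) (by omega) ht) _).ne'
  have hsig_ne_m2 : ∀ t, t + 2 < k → sigElt y t ≠ y (t + 1) * y (t + 2) := by
    intro t ht
    rcases hsig_spec t with h | h <;> rw [h]
    · intro he
      exact hcomm t (t + 1) (by omega) (by omega) (by omega) (lemA hG he)
    · exact (mul_lt_mul_left (hlt t (t + 1) (by omega) (by omega)) _).ne
  have hsig_ne_m' : ∀ t, t + 2 < k → sigElt y t ≠ y (t + 1) * y t := by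
    intro t ht
    rcases hsig_spec t with h | h <;> rw [h]
    · exact (mul_lt_mul_left (hlt (t + 1) (t + 2) (by omega) ht) _).ne'
    · intro he
      exact hcomm (t + 2) (t + 1) ht (by omega) (by omega) (lemA hG he)
  have hsig_ne_m'2 : ∀ t, t + 2 < k → sigElt y t ≠ y (t + 2) * y (t + 1) := by
    intro t ht
    rcases hsig_spec t with h | h <;> rw [h]
    · exact (mul_lt_mul_right (hlt t (t + 1) (by omega) (by omega)) _).ne
    · intro he
      exact hcomm (t + 1) t (by omega) (by omega) (by omega) (lemA hG he.symm)
  -- the four families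
  set TQ : Finset G := (Finset.range k).image (fun i => y i * y i) with hTQ
  set TM : Finset G := (Finset.range (k - 1)).image (fun i => y i * y (i + 1)) with hTM
  set TM' : Finset G := (Finset.range (k - 1)).image (fun i => y (i + 1) * y i) with hTM'
  set TS : Finset G := (Finset.range (k - 2)).image (sigElt y) with hTS
  -- cardinalities
  have hQcard : TQ.card = k := by
    rw [hTQ, Finset.card_image_of_injOn, Finset.card_range]
    intro i hi j hj h
    simp only [Finset.coe_range, Set.mem_Iio] at hi hj
    by_contra hne
    rcases lt_or_gt_of_ne hne with hij | hij
    · exact absurd h (hmm (hlt _ _ hij hj) (hlt _ _ hij hj)).ne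
    · exact absurd h.symm (hmm (hlt _ _ hij hi) (hlt _ _ hij hi)).ne
  have hMcard : TM.card = k - 1 := by
    rw [hTM, Finset.card_image_of_injOn, Finset.card_range]
    intro i hi j hj h
    simp only [Finset.coe_range, Set.mem_Iio] at hi hj
    by_contra hne
    rcases lt_or_gt_of_ne hne with hij | hij
    · exact absurd h (hmm (hlt _ _ hij (by omega)) (hlt _ _ (by omega) (by omega))).ne
    · exact absurd h.symm (hmm (hlt _ _ hij (by omega)) (hlt _ _ (by omega) (by omega))).ne
  have hM'card : TM'.card = k - 1 := by
    rw [hTM', Finset.card_image_of_injOn, Finset.card_range]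
    intro i hi j hj h
    simp only [Finset.coe_range, Set.mem_Iio] at hi hj
    by_contra hne
    rcases lt_or_gt_of_ne hne with hij | hij
    · exact absurd h (hmm (hlt _ _ (by omega) (by omega)) (hlt _ _ hij (by omega))).ne
    · exact absurd h.symm (hmm (hlt _ _ (by omega) (by omega)) (hlt _ _ hij (by omega))).ne
  have hScard : TS.card = k - 2 := by
    rw [hTS, Finset.card_image_of_injOn, Finset.card_range]
    intro t ht u hu h
    simp only [Finset.coe_range, Set.mem_Iio] at ht hu
    by_contra hne
    rcases lt_or_gt_of_ne hne with htu | htu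
    · rcases eq_or_lt_of_le (Nat.succ_le_of_lt htu) with he | hlt2
      · have he' : u = t + 1 := by omega
        rw [he'] at h
        exact hsig_ne_adj t (by omega) h
      · have : sigElt y t < sigElt y u :=
          (hsig_ub t (by omega)).trans
            (lt_of_le_of_lt (mul_le_mul' (hle _ _ (by omega)) (hle _ _ (by omega)))
              (hsig_lb u (by omega)))
        exact absurd h this.ne
    · rcases eq_or_lt_of_le (Nat.succ_le_of_lt htu) with he | hlt2
      · have he' : t = u + 1 := by omega
        rw [he'] at h
        exact hsig_ne_adj u (by omega) h.symm
      · have : sigElt y u < sigElt y t :=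
          (hsig_ub u (by omega)).trans
            (lt_of_le_of_lt (mul_le_mul' (hle _ _ (by omega)) (hle _ _ (by omega)))
              (hsig_lb t (by omega)))
        exact absurd h this.ne'
  -- pairwise distinctness across families
  have nQM : ∀ i j, i < k → j < k - 1 → y i * y i ≠ y j * y (j + 1) := by
    intro i j hi hj
    rcases le_or_gt i j with h | h
    · exact ((mul_le_mul' (hle _ _ h) (hle _ _ h)).trans_lt
        (mul_lt_mul_right (hlt j (j + 1) (by omega) (by omega)) _)).ne
    · exact (hml (hlt j i h hi) (hle (j + 1) i (by omega))).ne'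
  have nQM' : ∀ i j, i < k → j < k - 1 → y i * y i ≠ y (j + 1) * y j := by
    intro i j hi hj
    rcases le_or_gt i j with h | h
    · exact ((mul_le_mul' (hle _ _ h) (hle _ _ h)).trans_lt
        (mul_lt_mul_left (hlt j (j + 1) (by omega) (by omega)) _)).ne
    · exact (hlm (hle (j + 1) i (by omega)) (hlt j i h hi)).ne'
  have nQS : ∀ i t, i < k → t < k - 2 → y i * y i ≠ sigElt y t := by
    intro i t hi ht
    rcases lt_trichotomy i (t + 1) with h | h | h
    · exact ((mul_le_mul' (hle i t (by omega)) (hle i t (by omega))).trans_lt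
        (hsig_lb t (by omega))).ne
    · rw [h]; exact fun he => hsig_ne_sq t (by omega) he.symm
    · exact ((hsig_ub t (by omega)).trans_le
        (mul_le_mul' (hle (t + 2) i (by omega)) (hle (t + 2) i (by omega)))).ne'
  have nMM' : ∀ i j, i < k - 1 → j < k - 1 → y i * y (i + 1) ≠ y (j + 1) * y j := by
    intro i j hi hj
    rcases lt_trichotomy i j with h | h | h
    · refine (lt_trans (mul_lt_mul_left (hlt i (i + 1) (by omega) (by omega)) _) ?_).ne
      exact (mul_le_mul' (hle _ _ (by omega)) (hle _ _ (by omega))).trans_lt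
        (mul_lt_mul_left (hlt j (j + 1) (by omega) (by omega)) _)
    · rw [h]; exact hcomm j (j + 1) (by omega) (by omega) (by omega)
    · refine (lt_trans (mul_lt_mul_right (hlt j (j + 1) (by omega) (by omega)) _) ?_).ne'
      exact (mul_le_mul' (hle _ _ (by omega)) (hle _ _ (by omega))).trans_lt
        (mul_lt_mul_right (hlt i (i + 1) (by omega) (by omega)) _)
  have nMS : ∀ j t, j < k - 1 → t < k - 2 → y j * y (j + 1) ≠ sigElt y t := by
    intro j t hj ht
    rcases lt_trichotomy j t with h | h | h
    · refine (lt_trans (mul_lt_mul_left (hlt j (j + 1) (by omega) (by omega)) _) ?_).ne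
      exact (mul_le_mul' (hle _ _ (by omega)) (hle _ _ (by omega))).trans_lt
        (hsig_lb t (by omega))
    · rw [h]; exact fun he => hsig_ne_m t (by omega) he.symm
    · rcases eq_or_lt_of_le (Nat.succ_le_of_lt h) with he | h2
      · rw [← he]; exact fun he2 => hsig_ne_m2 t (by omega) he2.symm
      · have h3 : sigElt y t < y j * y (j + 1) :=
          ((hsig_ub t (by omega)).trans_le
            (mul_le_mul' (hle _ _ (by omega)) (hle _ _ (by omega)))).trans
            (mul_lt_mul_right (hlt j (j + 1) (by omega) (by omega)) _)
        exact h3.ne'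
  have nM'S : ∀ j t, j < k - 1 → t < k - 2 → y (j + 1) * y j ≠ sigElt y t := by
    intro j t hj ht
    rcases lt_trichotomy j t with h | h | h
    · refine (lt_trans (mul_lt_mul_right (hlt j (j + 1) (by omega) (by omega)) _) ?_).ne
      exact (mul_le_mul' (hle _ _ (by omega)) (hle _ _ (by omega))).trans_lt
        (hsig_lb t (by omega))
    · rw [h]; exact fun he => hsig_ne_m' t (by omega) he.symm
    · rcases eq_or_lt_of_le (Nat.succ_le_of_lt h) with he | h2
      · rw [← he]; exact fun he2 => hsig_ne_m'2 t (by omega) he2.symm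
      · have h3 : sigElt y t < y (j + 1) * y j :=
          ((hsig_ub t (by omega)).trans_le
            (mul_le_mul' (hle _ _ (by omega)) (hle _ _ (by omega)))).trans
            (mul_lt_mul_left (hlt j (j + 1) (by omega) (by omega)) _)
        exact h3.ne'
  -- disjointness
  have dQM : Disjoint TQ TM := by
    rw [Finset.disjoint_left]
    rintro a ha hb
    obtain ⟨i, hi, rfl⟩ := Finset.mem_image.mp ha
    obtain ⟨j, hj, hEq⟩ := Finset.mem_image.mp hb
    rw [Finset.mem_range] at hi hj
    exact nQM i j hi hj hEq.symm
  have dQM' : Disjoint TQ TM' := by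
    rw [Finset.disjoint_left]
    rintro a ha hb
    obtain ⟨i, hi, rfl⟩ := Finset.mem_image.mp ha
    obtain ⟨j, hj, hEq⟩ := Finset.mem_image.mp hb
    rw [Finset.mem_range] at hi hj
    exact nQM' i j hi hj hEq.symm
  have dQS : Disjoint TQ TS := by
    rw [Finset.disjoint_left]
    rintro a ha hb
    obtain ⟨i, hi, rfl⟩ := Finset.mem_image.mp ha
    obtain ⟨t, ht, hEq⟩ := Finset.mem_image.mp hb
    rw [Finset.mem_range] at hi ht
    exact nQS i t hi ht hEq.symm
  have dMM' : Disjoint TM TM' := by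
    rw [Finset.disjoint_left]
    rintro a ha hb
    obtain ⟨i, hi, rfl⟩ := Finset.mem_image.mp ha
    obtain ⟨j, hj, hEq⟩ := Finset.mem_image.mp hb
    rw [Finset.mem_range] at hi hj
    exact nMM' i j hi hj hEq.symm
  have dMS : Disjoint TM TS := by
    rw [Finset.disjoint_left]
    rintro a ha hb
    obtain ⟨j, hj, rfl⟩ := Finset.mem_image.mp ha
    obtain ⟨t, ht, hEq⟩ := Finset.mem_image.mp hb
    rw [Finset.mem_range] at hj ht
    exact nMS j t hj ht hEq.symm
  have dM'S : Disjoint TM' TS := by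
    rw [Finset.disjoint_left]
    rintro a ha hb
    obtain ⟨j, hj, rfl⟩ := Finset.mem_image.mp ha
    obtain ⟨t, ht, hEq⟩ := Finset.mem_image.mp hb
    rw [Finset.mem_range] at hj ht
    exact nM'S j t hj ht hEq.symm
  refine ⟨TQ ∪ TM ∪ TM' ∪ TS, ?_, ?_⟩
  · have c1 : (TQ ∪ TM).card = k + (k - 1) := by
      rw [Finset.card_union_of_disjoint dQM, hQcard, hMcard]
    have c2 : (TQ ∪ TM ∪ TM').card = k + (k - 1) + (k - 1) := by
      rw [Finset.card_union_of_disjoint (Finset.disjoint_union_left.mpr ⟨dQM', dMM'⟩), c1,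
        hM'card]
    have c3 : (TQ ∪ TM ∪ TM' ∪ TS).card = k + (k - 1) + (k - 1) + (k - 2) := by
      rw [Finset.card_union_of_disjoint (Finset.disjoint_union_left.mpr
        ⟨Finset.disjoint_union_left.mpr ⟨dQS, dMS⟩, dM'S⟩), c2, hScard]
    rw [c3]; omega
  · intro g hg
    rcases Finset.mem_union.mp hg with hg | hg
    · rcases Finset.mem_union.mp hg with hg | hg
      · rcases Finset.mem_union.mp hg with hg | hg
        · obtain ⟨i, hi, rfl⟩ := Finset.mem_image.mp hg
          rw [Finset.mem_range] at hi
          exact ⟨i, i, hi, hi, rfl⟩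
        · obtain ⟨i, hi, rfl⟩ := Finset.mem_image.mp hg
          rw [Finset.mem_range] at hi
          exact ⟨i, i + 1, by omega, by omega, rfl⟩
      · obtain ⟨i, hi, rfl⟩ := Finset.mem_image.mp hg
        rw [Finset.mem_range] at hi
        exact ⟨i + 1, i, by omega, by omega, rfl⟩
    · obtain ⟨t, ht, rfl⟩ := Finset.mem_image.mp hg
      rw [Finset.mem_range] at ht
      rcases hsig_spec t with h | h
      · exact ⟨t + 2, t, by omega, by omega, h⟩
      · exact ⟨t, t + 2, by omega, by omega, h⟩

end AuxCNA

/-- Proposition 2.2: a completely-non-abelian subset `S` of size `k` of an ordered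
nilpotent group of class 2 satisfies `|S²| ≥ 4k - 4`. -/
theorem stmt_1 {G : Type*} [Group G] [LinearOrder G]
    [CovariantClass G G (· * ·) (· < ·)]
    [CovariantClass G G (Function.swap (· * ·)) (· < ·)]
    (hG : ∀ x y : G, ⁅x, y⁆ ∈ Subgroup.center G)
    (S : Finset G)
    (hCNA : ∀ a ∈ S, ∀ b ∈ S, a ≠ b → a * b ≠ b * a) :
    4 * S.card - 4 ≤ (S * S).card := by
  by_cases hk : 2 ≤ S.card
  swap
  · have : 4 * S.card - 4 = 0 := by omega
    rw [this]; exact Nat.zero_le _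
  set k := S.card with hkdef
  have hkk : S.card = k := rfl
  set e := S.orderEmbOfFin hkk with he
  set y : ℕ → G := fun i => e ⟨min i (k - 1), by omega⟩ with hy
  have hmemy : ∀ i, y i ∈ S := by
    intro i
    rw [hy]
    exact S.orderEmbOfFin_mem hkk _
  have hlt : ∀ i j, i < j → j < k → y i < y j := by
    intro i j hij hj
    rw [hy]
    exact e.strictMono (by rw [Fin.mk_lt_mk]; omega)
  have hle : ∀ i j, i ≤ j → y i ≤ y j := by
    intro i j hij
    rw [hy]
    exact e.monotone (by rw [Fin.mk_le_mk]; omega)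
  have hclamp : ∀ i, k - 1 ≤ i → y i = y (k - 1) := by
    intro i hi
    rw [hy]
    exact congrArg e (Fin.ext (show min i (k - 1) = min (k - 1) (k - 1) by omega))
  have hinj : ∀ i j, i < k → j < k → y i = y j → i = j := by
    intro i j hi hj hEq
    rw [hy] at hEq
    have := e.injective hEq
    rw [Fin.mk.injEq] at this
    omega
  have hcomm : ∀ i j, i < k → j < k → i ≠ j → y i * y j ≠ y j * y i := by
    intro i j hi hj hij
    exact hCNA (y i) (hmemy i) (y j) (hmemy j) (fun hEq => hij (hinj i j hi hj hEq))
  obtain ⟨T, hc, hm⟩ := auxT hG k hk y hlt hle hclamp hcomm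
  refine le_trans hc (Finset.card_le_card ?_)
  intro g hg
  obtain ⟨i, j, hi, hj, rfl⟩ := hm g hg
  exact Finset.mul_mem_mul (hmemy i) (hmemy j)
end

section
/- Let G be a torsion-free nilpotent group of class 2 and let a, b, c ∈ G with either ab = bac or ba = cab, where ab ≠ ba. Let S = {a, ac, ac², ..., ac^i, b, bc, bc², ..., bc^j} for non-negative integers i, j, where these k = i + j + 2 elements are distinct. Then |S²| = 3k - 2. -/
open Pointwise
open scoped commutatorElement

/-- Example 3.1. -/
theorem stmt_5 {G : Type*} [Group G] [DecidableEq G]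
    (hG : ∀ x y : G, ⁅x, y⁆ ∈ Subgroup.center G)
    (htf : ∀ (g : G) (n : ℕ), 0 < n → g ^ n = 1 → g = 1)
    (a b c : G) (hab : a * b ≠ b * a)
    (hcomm : a * b = b * a * c ∨ b * a = c * (a * b))
    (i j : ℕ)
    (S : Finset G)
    (hS : S = (Finset.range (i + 1)).image (fun t => a * c ^ t)
        ∪ (Finset.range (j + 1)).image (fun t => b * c ^ t))
    (hcard : S.card = i + j + 2) :
    (S * S).card = 3 * (i + j + 2) - 2 := by
  classical
  have hcen : c ∈ Subgroup.center G := by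
    rcases hcomm with h | h
    · have e1 : c = a⁻¹ * (b⁻¹ * (a * b)) := by rw [h]; group
      have e2 : ⁅a⁻¹, b⁻¹⁆ = c := by rw [e1, commutatorElement_def]; group
      exact e2 ▸ hG a⁻¹ b⁻¹
    · have e1 : c = b * a * (a * b)⁻¹ := by rw [h]; group
      have e2 : ⁅b, a⁆ = c := by rw [e1, commutatorElement_def]; group
      exact e2 ▸ hG b a
  have hcc : ∀ g : G, Commute g c := fun g => Subgroup.mem_center_iff.mp hcen g
  have hc1 : c ≠ 1 := by
    intro h
    rcases hcomm with h' | h'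
    · rw [h, mul_one] at h'; exact hab h'
    · rw [h, one_mul] at h'; exact hab h'.symm
  have hzer : ∀ m : ℤ, c ^ m = 1 → m = 0 := by
    intro m hm
    by_contra h0
    apply hc1
    refine htf c m.natAbs (Int.natAbs_pos.mpr h0) ?_
    rcases Int.natAbs_eq m with he | he
    · rw [← zpow_natCast, ← he, hm]
    · have h2 : (m.natAbs : ℤ) = -m := by omega
      rw [← zpow_natCast, h2, zpow_neg, hm, inv_one]
  have hinjZ : ∀ m n : ℤ, c ^ m = c ^ n → m = n := by
    intro m n h
    have h1 : c ^ (m - n) = 1 := by rw [zpow_sub, h]; simp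
    have := hzer _ h1
    omega
  have hinjN : ∀ m n : ℕ, c ^ m = c ^ n → m = n := by
    intro m n h
    have h2 := hinjZ m n (by rw [zpow_natCast, zpow_natCast, h])
    exact_mod_cast h2
  obtain ⟨ε, hεc, hε⟩ : ∃ ε : G, (ε = c ∨ ε = c⁻¹) ∧ b * a = a * b * ε := by
    rcases hcomm with h | h
    · exact ⟨c⁻¹, Or.inr rfl, by rw [h]; group⟩
    · refine ⟨c, Or.inl rfl, ?_⟩
      rw [h]
      exact ((hcc (a * b)).eq).symm
  have hεg : ∀ g : G, ε * g = g * ε := by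
    intro g
    rcases hεc with h | h
    · rw [h]; exact (hcc g).eq.symm
    · rw [h]; exact ((hcc g).inv_right.eq).symm
  have K1 : ∀ m n : ℤ, (a * a) * c ^ m ≠ (b * b) * c ^ n := by
    intro m n h
    have hbb : b * ((b * b) * c ^ n) = ((b * b) * c ^ n) * b :=
      (((Commute.refl b).mul_right (Commute.refl b)).mul_right ((hcc b).zpow_right n)).eq
    rw [← h] at hbb
    have hc2 : b * (a * a) = (a * a) * b := by
      have hx : b * (a * a) * c ^ m = (a * a) * b * c ^ m := by
        calc b * (a * a) * c ^ m = b * ((a * a) * c ^ m) := by group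
          _ = ((a * a) * c ^ m) * b := hbb
          _ = (a * a) * (c ^ m * b) := by group
          _ = (a * a) * (b * c ^ m) := by rw [((hcc b).zpow_right m).eq]
          _ = (a * a) * b * c ^ m := by group
      exact mul_right_cancel hx
    have he : b * (a * a) = (a * a) * b * (ε * ε) := by
      calc b * (a * a) = (b * a) * a := by group
        _ = (a * b * ε) * a := by rw [hε]
        _ = (a * b) * (ε * a) := by group
        _ = (a * b) * (a * ε) := by rw [hεg a]
        _ = (a * (b * a)) * ε := by group
        _ = (a * (a * b * ε)) * ε := by rw [hε]
        _ = (a * a) * b * (ε * ε) := by group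
    have hee : (a * a) * b * (ε * ε) = (a * a) * b * 1 := by rw [mul_one, ← he, hc2]
    have hε1 : ε = 1 := htf ε 2 (by norm_num) (by rw [pow_two]; exact mul_left_cancel hee)
    apply hab
    rw [hε, hε1, mul_one]
  have K2 : ∀ m n : ℤ, (a * a) * c ^ m ≠ (a * b) * c ^ n := by
    intro m n h
    have h2 : a * c ^ m = b * c ^ n := by
      refine mul_left_cancel (a := a) ?_
      calc a * (a * c ^ m) = (a * a) * c ^ m := by group
        _ = (a * b) * c ^ n := h
        _ = a * (b * c ^ n) := by group
    have ha : a = b * c ^ (n - m) := by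
      have h3 : a = b * c ^ n * (c ^ m)⁻¹ := by rw [← h2]; group
      rw [h3]; group
    apply hab
    rw [ha, mul_assoc, ((hcc b).zpow_right (n - m)).symm.eq]
  have K3 : ∀ m n : ℤ, (b * b) * c ^ m ≠ (a * b) * c ^ n := by
    intro m n h
    have h2 : b * c ^ m = a * c ^ n := by
      refine mul_right_cancel (b := b) ?_
      calc b * c ^ m * b = b * (c ^ m * b) := by group
        _ = b * (b * c ^ m) := by rw [((hcc b).zpow_right m).eq]
        _ = (b * b) * c ^ m := by group
        _ = (a * b) * c ^ n := h
        _ = a * (b * c ^ n) := by group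
        _ = a * (c ^ n * b) := by rw [((hcc b).zpow_right n).eq]
        _ = a * c ^ n * b := by group
    have hb : b = a * c ^ (n - m) := by
      have h3 : b = a * c ^ n * (c ^ m)⁻¹ := by rw [← h2]; group
      rw [h3]; group
    apply hab
    rw [hb, mul_assoc, ((hcc a).zpow_right (n - m)).symm.eq]
  have key : ∀ (x y : G) (s t : ℕ), (x * c ^ s) * (y * c ^ t) = (x * y) * c ^ (s + t) := by
    intro x y s t
    calc (x * c ^ s) * (y * c ^ t) = x * (c ^ s * y) * c ^ t := by group
      _ = x * (y * c ^ s) * c ^ t := by rw [((hcc y).pow_right s).symm.eq]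
      _ = (x * y) * c ^ (s + t) := by rw [pow_add]; group
  have P : ∀ (x y : G) (p q : ℕ),
      ((Finset.range (p + 1)).image fun t => x * c ^ t) *
          ((Finset.range (q + 1)).image fun t => y * c ^ t)
        = (Finset.range (p + q + 1)).image fun m => (x * y) * c ^ m := by
    intro x y p q
    ext g
    simp only [Finset.mem_mul, Finset.mem_image, Finset.mem_range]
    constructor
    · rintro ⟨u, ⟨s, hs, rfl⟩, v, ⟨t, ht, rfl⟩, rfl⟩
      exact ⟨s + t, by omega, (key x y s t).symm⟩
    · rintro ⟨m, hm, rfl⟩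
      refine ⟨x * c ^ (min m p), ⟨min m p, by omega, rfl⟩,
        y * c ^ (m - min m p), ⟨m - min m p, by omega, rfl⟩, ?_⟩
      rw [key, show min m p + (m - min m p) = m from by omega]
  have hunion : ∀ (p q : G), q = p * c → ∀ n : ℕ,
      ((Finset.range (n + 1)).image fun m => p * c ^ m) ∪
          ((Finset.range (n + 1)).image fun m => q * c ^ m)
        = (Finset.range (n + 2)).image fun m => p * c ^ m := by
    intro p q hq n
    ext x
    simp only [Finset.mem_union, Finset.mem_image, Finset.mem_range]
    constructor
    · rintro (⟨m, hm, rfl⟩ | ⟨m, hm, rfl⟩)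
      · exact ⟨m, by omega, rfl⟩
      · exact ⟨m + 1, by omega, by rw [hq, pow_succ', ← mul_assoc]⟩
    · rintro ⟨m, hm, rfl⟩
      by_cases hm' : m < n + 1
      · exact Or.inl ⟨m, hm', rfl⟩
      · refine Or.inr ⟨m - 1, by omega, ?_⟩
        rw [hq, mul_assoc, ← pow_succ', show m - 1 + 1 = m from by omega]
  obtain ⟨w, r, hwr, hU⟩ : ∃ (w : G) (r : ℤ), w = (a * b) * c ^ r ∧
      ((Finset.range (i + j + 1)).image fun m => (a * b) * c ^ m) ∪
          ((Finset.range (j + i + 1)).image fun m => (b * a) * c ^ m)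
        = (Finset.range (i + j + 2)).image fun m => w * c ^ m := by
    rcases hεc with rfl | rfl
    · refine ⟨a * b, 0, by simp, ?_⟩
      rw [Nat.add_comm j i]
      exact hunion (a * b) (b * a) hε (i + j)
    · refine ⟨b * a, -1, by rw [hε, zpow_neg_one], ?_⟩
      rw [Nat.add_comm j i, Finset.union_comm]
      exact hunion (b * a) (a * b) (by rw [hε]; group) (i + j)
  have hSS : S * S =
      ((Finset.range (i + i + 1)).image fun m => (a * a) * c ^ m) ∪
      (((Finset.range (i + j + 2)).image fun m => w * c ^ m) ∪
       ((Finset.range (j + j + 1)).image fun m => (b * b) * c ^ m)) := by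
    rw [hS, Finset.union_mul, Finset.mul_union, Finset.mul_union,
      P a a i i, P a b i j, P b a j i, P b b j j, ← hU]
    ext x
    simp only [Finset.mem_union]
    tauto
  have hinjm : ∀ x : G, Function.Injective fun m : ℕ => x * c ^ m := by
    intro x m n h
    exact hinjN m n (mul_left_cancel h)
  have hd1 : Disjoint ((Finset.range (i + i + 1)).image fun m => (a * a) * c ^ m)
      ((Finset.range (i + j + 2)).image fun m => w * c ^ m) := by
    rw [Finset.disjoint_left]
    intro x hx hx'
    simp only [Finset.mem_image, Finset.mem_range] at hx hx'
    obtain ⟨m, _, hm⟩ := hx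
    obtain ⟨n, _, hn⟩ := hx'
    exact K2 (m : ℤ) (r + (n : ℤ))
      (by rw [zpow_natCast, hm, ← hn, hwr, mul_assoc, ← zpow_natCast c n, ← zpow_add])
  have hd2 : Disjoint ((Finset.range (i + i + 1)).image fun m => (a * a) * c ^ m)
      ((Finset.range (j + j + 1)).image fun m => (b * b) * c ^ m) := by
    rw [Finset.disjoint_left]
    intro x hx hx'
    simp only [Finset.mem_image, Finset.mem_range] at hx hx'
    obtain ⟨m, _, hm⟩ := hx
    obtain ⟨n, _, hn⟩ := hx'
    exact K1 (m : ℤ) (n : ℤ) (by rw [zpow_natCast, zpow_natCast, hm, ← hn])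
  have hd3 : Disjoint ((Finset.range (i + j + 2)).image fun m => w * c ^ m)
      ((Finset.range (j + j + 1)).image fun m => (b * b) * c ^ m) := by
    rw [Finset.disjoint_left]
    intro x hx hx'
    simp only [Finset.mem_image, Finset.mem_range] at hx hx'
    obtain ⟨m, _, hm⟩ := hx
    obtain ⟨n, _, hn⟩ := hx'
    exact K3 (n : ℤ) (r + (m : ℤ))
      (by rw [zpow_natCast, hn, ← hm, hwr, mul_assoc, ← zpow_natCast c m, ← zpow_add])
  rw [hSS, Finset.card_union_of_disjoint (Finset.disjoint_union_right.mpr ⟨hd1, hd2⟩),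
    Finset.card_union_of_disjoint hd3,
    Finset.card_image_of_injective _ (hinjm _), Finset.card_image_of_injective _ (hinjm _),
    Finset.card_image_of_injective _ (hinjm _), Finset.card_range, Finset.card_range,
    Finset.card_range]
  omega
end

section
/- Let G be a torsion-free nilpotent group of class 2 and let S be a subset of size k ≥ 4 with ⟨S⟩ non-abelian. Suppose |S²| = 3k - 2 and S = T ∪ {x} where ⟨T⟩ is abelian and |T| = k - 1. Then S = {a, ac, ..., ac^{k-2}, b} for some a, b, c ∈ G with c ≠ 1 and either ba = abc or ab = bac; moreover c ∈ Z(G). -/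
open Pointwise Finset
open scoped commutatorElement

section Freiman
variable {α : Type*} [AddCommGroup α] [LinearOrder α] [IsOrderedAddMonoid α] [DecidableEq α]

private lemma chain_mono {m : ℕ} (F : ℕ → α)
    (hF : ∀ i j : ℕ, i < j → j ≤ m → F i < F j) (hm : 1 ≤ m) :
    ∀ j : ℕ, j < 2 * m →
      (if j ≤ m then F 0 + F j else F (j - m) + F m) <
        (if j + 1 ≤ m then F 0 + F (j + 1) else F (j + 1 - m) + F m) := by
  intro j hj
  rcases lt_trichotomy (j+1) m with h | h | h
  · rw [if_pos (by omega), if_pos (by omega)]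
    exact add_lt_add_right (hF j (j+1) (by omega) (by omega)) _
  · rw [if_pos (by omega), if_pos (by omega)]
    exact add_lt_add_right (hF j (j+1) (by omega) (by omega)) _
  · rcases Nat.lt_or_ge j m with h2 | h2
    · -- j = m-1? no: j+1 > m and j < m impossible since j+1 > m → j ≥ m
      omega
    · rcases Nat.eq_or_lt_of_le h2 with heq | h3
      · have hjm : j = m := heq.symm
        subst hjm
        rw [if_pos le_rfl, if_neg (by omega), show j + 1 - j = 1 from by omega]
        exact add_lt_add_left (hF 0 1 one_pos hm) _
      · rw [if_neg (by omega), if_neg (by omega)]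
        have : j + 1 - m = (j - m) + 1 := by omega
        rw [this]
        exact add_lt_add_left (hF (j-m) (j-m+1) (by omega) (by omega)) _

private lemma freiman_setup {A : Finset α} {m : ℕ} (hm : 1 ≤ m) (hA : A.card = m + 1) :
    ∃ F : ℕ → α, (∀ i j : ℕ, i < j → j ≤ m → F i < F j) ∧ (∀ i, F i ∈ A) ∧
      A = (range (m+1)).image F := by
  have hpos : 0 < m + 1 := Nat.succ_pos m
  refine ⟨fun i => A.orderEmbOfFin hA ⟨min i m, by omega⟩, ?_, ?_, ?_⟩
  · intro i j hij hj
    exact (A.orderEmbOfFin hA).strictMono (by simp [Fin.mk_lt_mk]; omega)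
  · intro i; exact A.orderEmbOfFin_mem hA _
  · apply Finset.eq_of_subset_of_card_le
    · intro t ht
      have := A.range_orderEmbOfFin hA
      have : t ∈ Set.range (A.orderEmbOfFin hA) := by rw [this]; exact ht
      obtain ⟨i, rfl⟩ := this
      refine Finset.mem_image.2 ⟨i.1, Finset.mem_range.2 i.2, ?_⟩
      congr 1
      ext
      simp; omega
    · calc ((range (m+1)).image _).card ≤ (range (m+1)).card := Finset.card_image_le
        _ = m + 1 := by simp
        _ = A.card := hA.symm

lemma freiman_lb (A : Finset α) (m : ℕ) (hm : 1 ≤ m) (hA : A.card = m + 1) :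
    2 * m + 1 ≤ (A + A).card := by
  obtain ⟨F, hFlt, hFA, -⟩ := freiman_setup hm hA
  set C : ℕ → α := fun j => if j ≤ m then F 0 + F j else F (j - m) + F m with hC
  have hmono : ∀ i j : ℕ, i < j → j ≤ 2*m → C i < C j := by
    intro i j hij hj
    induction j with
    | zero => omega
    | succ j ih =>
      rcases Nat.lt_or_ge i j with h | h
      · exact (ih h (by omega)).trans (chain_mono F hFlt hm j (by omega))
      · have : i = j := by omega
        subst this
        exact chain_mono F hFlt hm i (by omega)
  have hmem : ∀ j, C j ∈ A + A := by
    intro j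
    rw [hC]
    dsimp only
    split <;> exact Finset.add_mem_add (hFA _) (hFA _)
  calc 2*m+1 = (range (2*m+1)).card := by simp
    _ ≤ (A+A).card := by
        apply Finset.card_le_card_of_injOn C (fun j _ => hmem j)
        intro i hi j hj hij
        simp only [Finset.coe_range, Set.mem_Iio] at hi hj
        by_contra hne
        rcases Nat.lt_or_ge i j with h | h
        · exact absurd hij (ne_of_lt (hmono i j h (by omega)))
        · exact absurd hij.symm (ne_of_lt (hmono j i (by omega) (by omega)))

end Freiman

section Freiman2
variable {α : Type*} [AddCommGroup α] [LinearOrder α] [IsOrderedAddMonoid α] [DecidableEq α]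

private lemma chain2_mono {m : ℕ} (F : ℕ → α)
    (hF : ∀ i j : ℕ, i < j → j ≤ m → F i < F j) (hm : 2 ≤ m) :
    ∀ j : ℕ, j < 2 * m →
      (if j ≤ 1 then F 0 + F j else if j ≤ m + 1 then F 1 + F (j-1) else F (j-m) + F m) <
      (if j + 1 ≤ 1 then F 0 + F (j+1) else if j + 1 ≤ m + 1 then F 1 + F j else
        F (j+1-m) + F m) := by
  intro j hj
  rcases Nat.lt_or_ge j 1 with h0 | h0
  · have : j = 0 := by omega
    subst this
    rw [if_pos (by omega : (0:ℕ) ≤ 1), if_pos (by omega : (0:ℕ)+1 ≤ 1)]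
    exact add_lt_add_right (hF 0 1 one_pos (by omega)) _
  · rcases Nat.eq_or_lt_of_le h0 with heq | h1
    · have : j = 1 := heq.symm
      subst this
      rw [if_pos le_rfl, if_neg (by omega), if_pos (by omega)]
      exact add_lt_add_left (hF 0 1 one_pos (by omega)) _
    · -- j ≥ 2
      rcases Nat.lt_or_ge j (m+1) with h2 | h2
      · rw [if_neg (by omega), if_pos (by omega), if_neg (by omega), if_pos (by omega)]
        exact add_lt_add_right (hF (j-1) j (by omega) (by omega)) _
      · rcases Nat.eq_or_lt_of_le h2 with heq | h3
        · have : j = m + 1 := heq.symm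
          subst this
          rw [if_neg (by omega), if_pos le_rfl, if_neg (by omega), if_neg (by omega),
            show m + 1 + 1 - m = 2 from by omega]
          exact add_lt_add_left (hF 1 2 (by omega) hm) _
        · rw [if_neg (by omega), if_neg (by omega), if_neg (by omega), if_neg (by omega),
            show j + 1 - m = (j - m) + 1 from by omega]
          exact add_lt_add_left (hF (j-m) (j-m+1) (by omega) (by omega)) _

lemma freiman_eq (A : Finset α) (m : ℕ) (hm : 2 ≤ m) (hA : A.card = m + 1)
    (hAA : (A + A).card = 2 * m + 1) :
    ∃ a d : α, d ≠ 0 ∧ A = (range (m+1)).image (fun i : ℕ => a + i • d) := by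
  obtain ⟨F, hFlt, hFA, hAeq⟩ := freiman_setup (by omega) hA
  set C1 : ℕ → α := fun j => if j ≤ m then F 0 + F j else F (j - m) + F m with hC1
  set C2 : ℕ → α := fun j =>
    if j ≤ 1 then F 0 + F j else if j ≤ m + 1 then F 1 + F (j-1) else F (j-m) + F m with hC2
  have h21 : 2 * m + 1 = 2 * m + 1 := rfl
  set G1 : Fin (2*m+1) → α := fun j => C1 j.1 with hG1
  set G2 : Fin (2*m+1) → α := fun j => C2 j.1 with hG2
  have hmono1 : StrictMono G1 := by
    rw [Fin.strictMono_iff_lt_succ]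
    intro i
    exact chain_mono F hFlt (by omega) i.1 i.2
  have hmono2 : StrictMono G2 := by
    rw [Fin.strictMono_iff_lt_succ]
    intro i
    exact chain2_mono F hFlt hm i.1 i.2
  have hmem1 : ∀ j, G1 j ∈ A + A := by
    intro j; rw [hG1, hC1]; dsimp only
    split <;> exact Finset.add_mem_add (hFA _) (hFA _)
  have hmem2 : ∀ j, G2 j ∈ A + A := by
    intro j; rw [hG2, hC2]; dsimp only
    split
    · exact Finset.add_mem_add (hFA _) (hFA _)
    · split <;> exact Finset.add_mem_add (hFA _) (hFA _)
  have he1 : G1 = (A+A).orderEmbOfFin hAA := Finset.orderEmbOfFin_unique hAA hmem1 hmono1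
  have he2 : G2 = (A+A).orderEmbOfFin hAA := Finset.orderEmbOfFin_unique hAA hmem2 hmono2
  have hGG : ∀ j : Fin (2*m+1), G1 j = G2 j := by rw [he1, he2]; intro j; rfl
  have key : ∀ j : ℕ, 2 ≤ j → j ≤ m → F 0 + F j = F 1 + F (j - 1) := by
    intro j h2 hjm
    have := hGG ⟨j, by omega⟩
    rw [hG1, hG2] at this
    dsimp only at this
    rw [hC1, hC2] at this
    dsimp only at this
    rw [if_pos hjm, if_neg (by omega), if_pos (by omega)] at this
    exact this
  set d : α := F 1 - F 0 with hd
  have hdne : d ≠ 0 := sub_ne_zero.2 (ne_of_gt (hFlt 0 1 one_pos (by omega)))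
  have hstep : ∀ j : ℕ, 1 ≤ j → j ≤ m → F j = F (j-1) + d := by
    intro j h1 hjm
    rcases Nat.eq_or_lt_of_le h1 with heq | h2
    · have : j = 1 := heq.symm
      subst this
      simp [hd]
    · have := key j (by omega) hjm
      rw [hd]
      have : F j = F 1 + F (j-1) - F 0 := by
        rw [← this]; abel
      rw [this]; abel
  have hFj : ∀ j : ℕ, j ≤ m → F j = F 0 + j • d := by
    intro j
    induction j with
    | zero => simp
    | succ i ih =>
      intro hjm
      have h1 := hstep (i+1) (by omega) hjm
      rw [show i + 1 - 1 = i from by omega] at h1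
      rw [h1, ih (by omega), succ_nsmul]
      abel
  refine ⟨F 0, d, hdne, ?_⟩
  rw [hAeq]
  apply Finset.image_congr
  intro i hi
  simp only [Finset.coe_range, Set.mem_Iio] at hi
  exact hFj i (by omega)

end Freiman2

-- torsion-free for integer exponents
lemma tf_int {G : Type*} [Group G] (htf : ∀ (g : G) (n : ℕ), 0 < n → g ^ n = 1 → g = 1)
    (g : G) (n : ℤ) (hn : n ≠ 0) (h : g ^ n = 1) : g = 1 := by
  apply htf g n.natAbs (by omega)
  rcases Int.natAbs_eq n with he | he
  · rw [← zpow_natCast, ← he, h]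
  · rw [← zpow_natCast, show (n.natAbs : ℤ) = -n from by omega, zpow_neg, h, inv_one]

lemma bridge {G : Type*} [Group G] [DecidableEq G]
    (htf : ∀ (g : G) (n : ℕ), 0 < n → g ^ n = 1 → g = 1)
    (T : Finset G)
    (hTab : ∀ u ∈ Subgroup.closure (T : Set G), ∀ v ∈ Subgroup.closure (T : Set G),
      u * v = v * u)
    (m : ℕ) (hm : 2 ≤ m) (hcard : T.card = m + 1) :
    2 * m + 1 ≤ (T * T).card ∧
      ((T * T).card = 2 * m + 1 →
        ∃ a c : G, c ≠ 1 ∧ T = (Finset.range (m+1)).image (fun i : ℕ => a * c ^ i)) := by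
  classical
  set H := Subgroup.closure (T : Set G) with hH
  letI : CommGroup H :=
    { (inferInstance : Group H) with
      mul_comm := fun u v => Subtype.ext (hTab u.1 u.2 v.1 v.2) }
  haveI : Module.Finite ℤ (Additive H) :=
    Module.Finite.iff_addGroup_fg.mpr (GroupFG.iff_add_fg.mp (Group.closure_finset_fg T))
  haveI : NoZeroSMulDivisors ℤ (Additive H) := by
    constructor
    intro n u h
    by_contra hcon
    push_neg at hcon
    obtain ⟨hn, hu⟩ := hcon
    apply hu
    have h2 : (u.toMul : H) ^ n = 1 := by
      have := congrArg Additive.toMul h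
      rwa [toMul_zsmul] at this
    have h3 : ((u.toMul : H) : G) ^ n = 1 := by
      rw [← SubgroupClass.coe_zpow, h2, Subgroup.coe_one]
    have h4 : ((u.toMul : H) : G) = 1 := tf_int htf _ n hn h3
    have h5 : (u.toMul : H) = 1 := Subtype.ext h4
    exact (Additive.toMul).injective (by simpa using h5)
  haveI : Module.Free ℤ (Additive H) := Module.free_of_finite_type_torsion_free'
  set ι := Module.Free.ChooseBasisIndex ℤ (Additive H) with hι
  set n := Fintype.card ι with hn
  set b : Module.Basis (Fin n) ℤ (Additive H) :=
    (Module.Free.chooseBasis ℤ (Additive H)).reindex (Fintype.equivFin ι) with hb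
  set β := Lex (Fin n →₀ ℤ) with hβ
  set ψ : H → β := fun h => toLex (b.repr (Additive.ofMul h)) with hψ
  have hψ_mul : ∀ u v : H, ψ (u * v) = ψ u + ψ v := by
    intro u v
    rw [hψ]
    dsimp only
    rw [show Additive.ofMul (u*v) = Additive.ofMul u + Additive.ofMul v from rfl, map_add]
    rfl
  have hψ_inj : Function.Injective ψ := by
    intro u v h
    have := b.repr.injective (toLex.injective h)
    exact Additive.ofMul.injective this
  have hψ_pow : ∀ (u : H) (i : ℕ), ψ (u ^ i) = i • ψ u := by
    intro u i
    induction i with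
    | zero => simp [hψ]
    | succ j ih => rw [pow_succ, hψ_mul, ih, succ_nsmul]
  -- total map
  set Θ : G → β := fun g => if hg : g ∈ H then ψ ⟨g, hg⟩ else 0 with hΘ
  have hΘ_val : ∀ (g : G) (hg : g ∈ H), Θ g = ψ ⟨g, hg⟩ := by
    intro g hg; rw [hΘ]; dsimp only; rw [dif_pos hg]
  have hΘ_mul : ∀ g₁ g₂ : G, g₁ ∈ H → g₂ ∈ H → Θ (g₁ * g₂) = Θ g₁ + Θ g₂ := by
    intro g₁ g₂ h₁ h₂
    rw [hΘ_val _ (mul_mem h₁ h₂), hΘ_val _ h₁, hΘ_val _ h₂, ← hψ_mul]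
    rfl
  have hΘ_inj : ∀ g₁ ∈ H, ∀ g₂ ∈ H, Θ g₁ = Θ g₂ → g₁ = g₂ := by
    intro g₁ h₁ g₂ h₂ he
    rw [hΘ_val _ h₁, hΘ_val _ h₂] at he
    exact congrArg Subtype.val (hψ_inj he)
  have hTH : ∀ t ∈ T, t ∈ H := fun t ht => Subgroup.subset_closure ht
  have hTTH : ∀ t ∈ T * T, t ∈ H := by
    intro t ht
    obtain ⟨u, hu, v, hv, rfl⟩ := Finset.mem_mul.1 ht
    exact mul_mem (hTH u hu) (hTH v hv)
  set A : Finset β := T.image Θ with hA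
  have hAcard : A.card = m + 1 := by
    rw [hA, Finset.card_image_of_injOn, hcard]
    intro u hu v hv he
    exact hΘ_inj u (hTH u hu) v (hTH v hv) he
  have hAA : A + A = (T * T).image Θ := by
    ext z
    constructor
    · intro hz
      obtain ⟨u, hu, v, hv, rfl⟩ := Finset.mem_add.1 hz
      obtain ⟨u', hu', rfl⟩ := Finset.mem_image.1 hu
      obtain ⟨v', hv', rfl⟩ := Finset.mem_image.1 hv
      exact Finset.mem_image.2 ⟨u' * v', Finset.mul_mem_mul hu' hv',
        hΘ_mul u' v' (hTH _ hu') (hTH _ hv')⟩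
    · intro hz
      obtain ⟨w, hw, rfl⟩ := Finset.mem_image.1 hz
      obtain ⟨u, hu, v, hv, rfl⟩ := Finset.mem_mul.1 hw
      exact Finset.mem_add.2 ⟨Θ u, Finset.mem_image_of_mem _ hu, Θ v,
        Finset.mem_image_of_mem _ hv, (hΘ_mul u v (hTH _ hu) (hTH _ hv)).symm⟩
  have hAAcard : (A + A).card = (T * T).card := by
    rw [hAA, Finset.card_image_of_injOn]
    intro u hu v hv he
    exact hΘ_inj u (hTTH u (Finset.mem_coe.1 hu)) v (hTTH v (Finset.mem_coe.1 hv)) he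
  constructor
  · rw [← hAAcard]
    exact freiman_lb A m (by omega) hAcard
  · intro hTT
    obtain ⟨a', d, hd, hAim⟩ := freiman_eq A m hm hAcard (by rw [hAAcard, hTT])
    have ha0 : a' ∈ A := by
      rw [hAim]
      exact Finset.mem_image.2 ⟨0, Finset.mem_range.2 (by omega), by simp⟩
    have ha1 : a' + d ∈ A := by
      rw [hAim]
      exact Finset.mem_image.2 ⟨1, Finset.mem_range.2 (by omega), by simp⟩
    obtain ⟨a, haT, haΘ⟩ := Finset.mem_image.1 ha0
    obtain ⟨a₁, ha₁T, ha₁Θ⟩ := Finset.mem_image.1 ha1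
    set c : G := a⁻¹ * a₁ with hc
    have hcH : c ∈ H := mul_mem (inv_mem (hTH a haT)) (hTH a₁ ha₁T)
    have haH := hTH a haT
    have hac : a * c = a₁ := by rw [hc]; group
    have hΘc : Θ c = d := by
      have h1 : Θ (a * c) = Θ a + Θ c := hΘ_mul a c haH hcH
      rw [hac, ha₁Θ, haΘ] at h1
      exact (add_left_cancel h1).symm
    have hΘ_one : Θ (1 : G) = 0 := by
      rw [hΘ_val _ (one_mem H)]
      have h1 : (⟨(1:G), one_mem H⟩ : H) = 1 := rfl
      rw [h1, hψ]
      simp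
    have hcne : c ≠ 1 := by
      intro h
      apply hd
      rw [← hΘc, h, hΘ_one]
    have hΘpow : ∀ i : ℕ, Θ (a * c ^ i) = a' + i • d := by
      intro i
      have hciH : c ^ i ∈ H := pow_mem hcH i
      rw [hΘ_mul a (c^i) haH hciH, haΘ]
      congr 1
      rw [hΘ_val _ hciH]
      have h2 : (⟨c ^ i, hciH⟩ : H) = (⟨c, hcH⟩ : H) ^ i := by
        ext
        simp
      rw [h2, hψ_pow, ← hΘ_val c hcH, hΘc]
    refine ⟨a, c, hcne, ?_⟩
    ext t
    simp only [Finset.mem_image, Finset.mem_range]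
    constructor
    · intro ht
      have h1 : Θ t ∈ A := Finset.mem_image_of_mem _ ht
      rw [hAim] at h1
      obtain ⟨i, hi, hΘt⟩ := Finset.mem_image.1 h1
      rw [Finset.mem_range] at hi
      refine ⟨i, hi, ?_⟩
      have h2 : Θ (a * c ^ i) = Θ t := by rw [hΘpow i, hΘt]
      exact (hΘ_inj _ (mul_mem haH (pow_mem hcH i)) _ (hTH t ht) h2)
    · rintro ⟨i, hi, rfl⟩
      have h1 : a' + i • d ∈ A := by
        rw [hAim]
        exact Finset.mem_image.2 ⟨i, Finset.mem_range.2 hi, rfl⟩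
      obtain ⟨t', ht', hΘt'⟩ := Finset.mem_image.1 h1
      have h2 : Θ t' = Θ (a * c ^ i) := by rw [hΘt', hΘpow i]
      have h3 : t' = a * c ^ i :=
        hΘ_inj _ (hTH t' ht') _ (mul_mem haH (pow_mem hcH i)) h2
      rwa [← h3]

/-- Proposition 3.4. -/
theorem stmt_7 {G : Type*} [Group G] [DecidableEq G]
    (hG : ∀ x y : G, ⁅x, y⁆ ∈ Subgroup.center G)
    (htf : ∀ (g : G) (n : ℕ), 0 < n → g ^ n = 1 → g = 1)
    (k : ℕ) (hk : 4 ≤ k)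
    (T : Finset G) (x : G) (hx : x ∉ T) (hT : T.card = k - 1)
    (S : Finset G) (hS : S = insert x T)
    (hTab : ∀ u ∈ Subgroup.closure (T : Set G), ∀ v ∈ Subgroup.closure (T : Set G),
      u * v = v * u)
    (hSnab : ¬ ∀ u ∈ Subgroup.closure (S : Set G), ∀ v ∈ Subgroup.closure (S : Set G),
      u * v = v * u)
    (hScard : (S * S).card = 3 * k - 2) :
    ∃ a b c : G, c ≠ 1 ∧ c ∈ Subgroup.center G ∧
      (b * a = a * b * c ∨ a * b = b * a * c) ∧
      S = insert b ((Finset.range (k - 1)).image (fun t => a * c ^ t)) := by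
  classical
  set m : ℕ := k - 2 with hmdef
  have hm2 : 2 ≤ m := by omega
  have hTcard : T.card = m + 1 := by omega
  -- the commutator-with-x function
  set Z : G → G := fun g => g⁻¹ * (x⁻¹ * g * x) with hZ
  have hZ_center : ∀ g, Z g ∈ Subgroup.center G := by
    intro g
    have h1 := hG g⁻¹ x⁻¹
    have h2 : ⁅g⁻¹, x⁻¹⁆ = Z g := by rw [hZ]; dsimp only; rw [commutatorElement_def]; group
    rwa [h2] at h1
  have hZ_comm : ∀ g y : G, y * Z g = Z g * y := fun g y =>
    (Subgroup.mem_center_iff.1 (hZ_center g) y)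
  have hconj : ∀ g, x⁻¹ * g * x = g * Z g := by intro g; rw [hZ]; dsimp only; group
  have hZ_mul : ∀ g h : G, Z (g * h) = Z g * Z h := by
    intro g h
    have h1 : x⁻¹ * (g * h) * x = (x⁻¹ * g * x) * (x⁻¹ * h * x) := by group
    rw [hconj, hconj, hconj] at h1
    have h2 : g * Z g * (h * Z h) = g * h * (Z g * Z h) := by
      rw [mul_assoc g (Z g) (h * Z h), ← mul_assoc (Z g) h (Z h), ← hZ_comm g h,
        mul_assoc h (Z g) (Z h), ← mul_assoc g h (Z g * Z h)]
    rw [h2] at h1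
    exact mul_left_cancel h1
  have hZ_zpow : ∀ (g : G) (i : ℤ), Z (g ^ i) = Z g ^ i := by
    intro g i
    have h1 : x⁻¹ * g ^ i * x = (x⁻¹ * g * x) ^ i := by
      have := map_zpow (MulAut.conj x⁻¹) g i
      simpa [MulAut.conj_apply, mul_assoc] using this
    rw [hconj, hconj] at h1
    have h2 : (g * Z g) ^ i = g ^ i * Z g ^ i :=
      Commute.mul_zpow (hZ_comm g g) i
    rw [h2] at h1
    exact mul_left_cancel h1
  have hZ_pow : ∀ (g : G) (i : ℕ), Z (g ^ i) = Z g ^ i := by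
    intro g i
    have := hZ_zpow g (i : ℤ)
    rwa [zpow_natCast, zpow_natCast] at this
  have hZ_one_of_center : ∀ z ∈ Subgroup.center G, Z z = 1 := by
    intro z hz
    have h1 : x⁻¹ * z = z * x⁻¹ := Subgroup.mem_center_iff.1 hz x⁻¹
    rw [hZ]
    dsimp only
    rw [show x⁻¹ * z * x = (x⁻¹ * z) * x from by group, h1]
    group
  have hZ_iff : ∀ g, Z g = 1 ↔ x * g = g * x := by
    intro g
    constructor
    · intro h
      have h1 := hconj g
      rw [h, mul_one] at h1
      have h2 : x * (x⁻¹ * g * x) = x * g := by rw [h1]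
      rw [show x * (x⁻¹ * g * x) = g * x from by group] at h2
      exact h2.symm
    · intro h
      rw [hZ]
      dsimp only
      rw [show x⁻¹ * g * x = x⁻¹ * (g * x) from by group, ← h,
        show x⁻¹ * (x * g) = g from by group]
      group
  -- nonabelian consequences
  have hNONAB : ¬ (∀ t ∈ T, x * t = t * x) := by
    intro hcomm
    apply hSnab
    have hpair : ∀ s₁ ∈ (S : Set G), ∀ s₂ ∈ (S : Set G), s₁ * s₂ = s₂ * s₁ := by
      intro s₁ h₁ s₂ h₂
      rw [hS] at h₁ h₂
      simp only [Finset.coe_insert, Set.mem_insert_iff, Finset.mem_coe] at h₁ h₂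
      rcases h₁ with rfl | h₁ <;> rcases h₂ with rfl | h₂
      · rfl
      · exact hcomm s₂ h₂
      · exact (hcomm s₁ h₁).symm
      · exact hTab s₁ (Subgroup.subset_closure h₁) s₂ (Subgroup.subset_closure h₂)
    intro u hu v hv
    induction hu, hv using Subgroup.closure_induction₂ with
    | mem a b ha hb => exact hpair a ha b hb
    | one_left b hb => rw [one_mul, mul_one]
    | one_right a ha => rw [one_mul, mul_one]
    | mul_left a b cc ha hb hc h1 h2 => rw [mul_assoc, h2, ← mul_assoc, h1, mul_assoc]
    | mul_right a b cc ha hb hc h1 h2 => rw [← mul_assoc, h1, mul_assoc, h2, ← mul_assoc]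
    | inv_left a b ha hb h1 =>
        rw [eq_comm, mul_inv_eq_iff_eq_mul, mul_assoc, ← h1, ← mul_assoc, inv_mul_cancel,
          one_mul]
    | inv_right a b ha hb h1 =>
        rw [mul_inv_eq_iff_eq_mul, mul_assoc, h1, ← mul_assoc, inv_mul_cancel, one_mul]
  have hxcl : x ∉ Subgroup.closure (T : Set G) := by
    intro hxc
    apply hSnab
    have hsub : (S : Set G) ⊆ (Subgroup.closure (T : Set G) : Set G) := by
      rw [hS]
      intro s hs
      simp only [Finset.coe_insert, Set.mem_insert_iff, Finset.mem_coe] at hs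
      rcases hs with rfl | hs
      · exact hxc
      · exact Subgroup.subset_closure hs
    have hle : Subgroup.closure (S : Set G) ≤ Subgroup.closure (T : Set G) :=
      (Subgroup.closure_le _).2 hsub
    intro u hu v hv
    exact hTab u (hle hu) v (hle hv)
  -- the pieces of S * S
  set xT : Finset G := T.image (fun t => x * t) with hxT
  set Tx : Finset G := T.image (fun t => t * x) with hTx
  have hSS : S * S = (xT ∪ Tx ∪ {x * x}) ∪ T * T := by
    rw [hS]
    ext z
    simp only [Finset.mem_mul, Finset.mem_insert, Finset.mem_union, Finset.mem_singleton,
      hxT, hTx, Finset.mem_image]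
    constructor
    · rintro ⟨u, hu, v, hv, rfl⟩
      rcases hu with rfl | hu <;> rcases hv with rfl | hv
      · exact Or.inl (Or.inr rfl)
      · exact Or.inl (Or.inl (Or.inl ⟨v, hv, rfl⟩))
      · exact Or.inl (Or.inl (Or.inr ⟨u, hu, rfl⟩))
      · exact Or.inr ⟨u, hu, v, hv, rfl⟩
    · rintro (((⟨t, ht, rfl⟩ | ⟨t, ht, rfl⟩) | rfl) | ⟨u, hu, v, hv, rfl⟩)
      · exact ⟨x, Or.inl rfl, t, Or.inr ht, rfl⟩
      · exact ⟨t, Or.inr ht, x, Or.inl rfl, rfl⟩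
      · exact ⟨x, Or.inl rfl, x, Or.inl rfl, rfl⟩
      · exact ⟨u, Or.inr hu, v, Or.inr hv, rfl⟩
  have hTTcl : ∀ g ∈ T * T, g ∈ Subgroup.closure (T : Set G) := by
    intro g hg
    obtain ⟨u, hu, v, hv, rfl⟩ := Finset.mem_mul.1 hg
    exact mul_mem (Subgroup.subset_closure hu) (Subgroup.subset_closure hv)
  have hx2xT : x * x ∉ xT := by
    rw [hxT]
    simp only [Finset.mem_image, not_exists]
    rintro t ⟨ht, hteq⟩
    have h1 : t = x := mul_left_cancel hteq
    subst h1
    exact hx ht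
  have hx2Tx : x * x ∉ Tx := by
    rw [hTx]
    simp only [Finset.mem_image, not_exists]
    rintro t ⟨ht, hteq⟩
    have h1 : t = x := mul_right_cancel hteq
    subst h1
    exact hx ht
  have hx2TT : x * x ∉ T * T := by
    intro hmem
    apply hNONAB
    intro t ht
    have hx2c : x * x ∈ Subgroup.closure (T : Set G) := hTTcl _ hmem
    have hcomm2 : x * x * t = t * (x * x) :=
      hTab (x*x) hx2c t (Subgroup.subset_closure ht)
    -- derive (Z t)^2 = 1
    have h1 : x⁻¹ * (x⁻¹ * t * x) * x = t * Z t * Z t := by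
      rw [hconj t, show x⁻¹ * (t * Z t) * x = (x⁻¹ * t * x) * Z t from by
        rw [show x⁻¹ * (t * Z t) * x = x⁻¹ * t * (Z t * x) from by group, ← hZ_comm t x]
        group, hconj t]
    have h2 : x⁻¹ * (x⁻¹ * t * x) * x = t := by
      rw [show x⁻¹ * (x⁻¹ * t * x) * x = x⁻¹ * x⁻¹ * (t * (x * x)) from by group, ← hcomm2]
      group
    have h3 : Z t ^ 2 = 1 := by
      have := h2.symm.trans h1
      have h4 : t * (Z t * Z t) = t * 1 := by
        rw [mul_one, ← mul_assoc]
        exact this.symm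
      have h5 := mul_left_cancel h4
      rw [pow_two, h5]
    exact (hZ_iff t).1 (htf (Z t) 2 (by omega) h3)
  have hxTTT : Disjoint xT (T * T) := by
    rw [Finset.disjoint_left]
    intro g hg hg2
    rw [hxT] at hg
    obtain ⟨t, ht, rfl⟩ := Finset.mem_image.1 hg
    apply hxcl
    have h1 : x * t ∈ Subgroup.closure (T : Set G) := hTTcl _ hg2
    have h2 := mul_mem h1 (inv_mem (Subgroup.subset_closure ht))
    rwa [mul_assoc, mul_inv_cancel, mul_one] at h2
  have hTxTT : Disjoint Tx (T * T) := by
    rw [Finset.disjoint_left]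
    intro g hg hg2
    rw [hTx] at hg
    obtain ⟨t, ht, rfl⟩ := Finset.mem_image.1 hg
    apply hxcl
    have h1 : t * x ∈ Subgroup.closure (T : Set G) := hTTcl _ hg2
    have h2 := mul_mem (inv_mem (Subgroup.subset_closure ht)) h1
    rwa [← mul_assoc, inv_mul_cancel, one_mul] at h2
  have hxTcard : xT.card = m + 1 := by
    rw [hxT, Finset.card_image_of_injective _ (mul_right_injective x), hTcard]
  have hcount : (xT ∪ Tx).card + 1 + (T * T).card = 3 * m + 4 := by
    have hd1 : Disjoint (xT ∪ Tx ∪ {x * x}) (T * T) := by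
      rw [Finset.disjoint_left]
      intro g hg hg2
      rcases Finset.mem_union.1 hg with hg1 | hg1
      · rcases Finset.mem_union.1 hg1 with hg3 | hg3
        · exact Finset.disjoint_left.1 hxTTT hg3 hg2
        · exact Finset.disjoint_left.1 hTxTT hg3 hg2
      · rw [Finset.mem_singleton] at hg1
        subst hg1
        exact hx2TT hg2
    have hd2 : Disjoint (xT ∪ Tx) {x * x} := by
      rw [Finset.disjoint_right]
      intro g hg
      rw [Finset.mem_singleton] at hg
      subst hg
      intro hmem
      rcases Finset.mem_union.1 hmem with h | h
      · exact hx2xT h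
      · exact hx2Tx h
    have e1 : (S * S).card = (xT ∪ Tx ∪ {x * x}).card + (T * T).card := by
      rw [hSS, Finset.card_union_of_disjoint hd1]
    have e2 : (xT ∪ Tx ∪ {x * x}).card = (xT ∪ Tx).card + 1 := by
      rw [Finset.card_union_of_disjoint hd2, Finset.card_singleton]
    rw [e1, e2] at hScard
    omega
  have hcancel : ∀ (g : G) (i j : ℕ), i < j → g ^ i = g ^ j → g = 1 := by
    intro g i j hij heq
    have h1 : g ^ i * g ^ (j - i) = g ^ j := by
      rw [← pow_add]
      congr 1
      omega
    rw [← heq, mul_eq_left] at h1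
    exact htf g (j - i) (by omega) h1
  have hUge : m + 2 ≤ (xT ∪ Tx).card := by
    by_contra hcon
    push_neg at hcon
    have hle1 : xT.card ≤ (xT ∪ Tx).card := Finset.card_le_card Finset.subset_union_left
    have hxTeq : xT = xT ∪ Tx :=
      Finset.eq_of_subset_of_card_le Finset.subset_union_left (by omega)
    have hTxsub : Tx ⊆ xT := by rw [hxTeq]; exact Finset.subset_union_right
    have hmaps : ∀ t ∈ T, x⁻¹ * t * x ∈ T := by
      intro t ht
      have h1 : t * x ∈ Tx := by
        rw [hTx]
        exact Finset.mem_image_of_mem _ ht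
      have h2 := hTxsub h1
      rw [hxT] at h2
      obtain ⟨t', ht', heq⟩ := Finset.mem_image.1 h2
      have h3 : x⁻¹ * t * x = t' := by
        rw [show x⁻¹ * t * x = x⁻¹ * (t * x) from by group, ← heq]
        group
      rw [h3]
      exact ht'
    have hiter : ∀ t ∈ T, ∀ N : ℕ, t * Z t ^ N ∈ T := by
      intro t ht N
      induction N with
      | zero => simpa using ht
      | succ j ih =>
        have h1 := hmaps _ ih
        have h2 : Z (t * Z t ^ j) = Z t := by
          rw [hZ_mul, hZ_pow, hZ_one_of_center _ (hZ_center t), one_pow, mul_one]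
        rw [hconj, h2] at h1
        rwa [mul_assoc, ← pow_succ] at h1
    apply hNONAB
    intro t ht
    apply (hZ_iff t).1
    have hmapsto : ∀ N ∈ Finset.range (T.card + 1), t * Z t ^ N ∈ T := fun N _ => hiter t ht N
    have hlt : T.card < (Finset.range (T.card + 1)).card := by simp
    obtain ⟨i, hi, j, hj, hne, heq⟩ :=
      Finset.exists_ne_map_eq_of_card_lt_of_maps_to hlt hmapsto
    have h1 : Z t ^ i = Z t ^ j := mul_left_cancel heq
    rcases Nat.lt_or_ge i j with h | h
    · exact hcancel _ i j h h1
    · exact hcancel _ j i (by omega) h1.symm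
  obtain ⟨hlb, heqc⟩ := bridge htf T hTab m hm2 hTcard
  have hTTcard : (T * T).card = 2 * m + 1 := by omega
  have hUcard : (xT ∪ Tx).card = m + 2 := by omega
  obtain ⟨a, c, hcne, hTim⟩ := heqc hTTcard
  -- facts about a and c
  have haT : a ∈ T := by
    rw [hTim]
    exact Finset.mem_image.2 ⟨0, Finset.mem_range.2 (by omega), by simp⟩
  have hacT : a * c ∈ T := by
    rw [hTim]
    exact Finset.mem_image.2 ⟨1, Finset.mem_range.2 (by omega), by simp⟩
  have hccl : c ∈ Subgroup.closure (T : Set G) := by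
    have h1 := Subgroup.subset_closure haT
    have h2 := Subgroup.subset_closure hacT
    have h3 := mul_mem (inv_mem h1) h2
    rwa [show a⁻¹ * (a * c) = c from by group] at h3
  set e : G := Z a with he
  set w : G := Z c with hwdef
  have hecen : e ∈ Subgroup.center G := hZ_center a
  have hwcen : w ∈ Subgroup.center G := hZ_center c
  set τ : G → G := fun g => x⁻¹ * g * x with hτ
  have hτinj : Function.Injective τ := by
    intro u v h
    have h1 := mul_right_cancel h
    exact mul_left_cancel h1
  have hUimg : xT ∪ Tx = (T ∪ T.image τ).image (fun g => x * g) := by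
    rw [Finset.image_union]
    congr 1
    rw [hTx, Finset.image_image]
    apply Finset.image_congr
    intro t ht
    dsimp [τ]
    group
  have hVcard : (T ∪ T.image τ).card = m + 2 := by
    rw [hUimg, Finset.card_image_of_injective _ (mul_right_injective x)] at hUcard
    exact hUcard
  have hτT : T.image τ = (Finset.range (m+1)).image (fun i : ℕ => a * c ^ i * (e * w ^ i)) := by
    rw [hTim, Finset.image_image]
    apply Finset.image_congr
    intro i hi
    dsimp [τ]
    rw [hconj (a * c ^ i), hZ_mul, hZ_pow]
  have hτTcard : (T.image τ).card = m + 1 := by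
    rw [Finset.card_image_of_injective _ hτinj, hTcard]
  have hIcard : (T ∩ T.image τ).card = m := by
    have h1 := Finset.card_union_add_card_inter T (T.image τ)
    rw [hVcard, hTcard, hτTcard] at h1
    omega
  have hcpow_inj : ∀ p q : ℤ, c ^ p = c ^ q → p = q := by
    intro p q h
    by_contra hne
    have h1 : c ^ (p - q) = 1 := by
      rw [zpow_sub, h, mul_inv_cancel]
    exact hcne (tf_int htf c (p - q) (by omega) h1)
  have hcwC : Commute c w := hZ_comm c c
  have hecomm : ∀ y : G, y * e = e * y := Subgroup.mem_center_iff.1 hecen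
  have hw1 : w = 1 := by
    by_cases hcw1 : c * w = 1
    · exfalso
      have h1 : c = w⁻¹ := eq_inv_of_mul_eq_one_left hcw1
      have hccen : c ∈ Subgroup.center G := by
        rw [h1]
        exact inv_mem hwcen
      have h2 : w = 1 := hZ_one_of_center c hccen
      rw [h2, mul_one] at hcw1
      exact hcne hcw1
    · have hτT' : T.image τ = (Finset.range (m+1)).image (fun i : ℕ => (a * e) * (c * w) ^ i) := by
        rw [hτT]
        apply Finset.image_congr
        intro i hi
        dsimp
        rw [hcwC.mul_pow]
        calc a * c ^ i * (e * w ^ i) = a * (c ^ i * e) * w ^ i := by group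
          _ = a * (e * c ^ i) * w ^ i := by rw [hecomm (c ^ i)]
          _ = a * e * (c ^ i * w ^ i) := by group
      have h2lt : 1 < (T ∩ T.image τ).card := by omega
      obtain ⟨u, hu, v, hv, huv⟩ := Finset.one_lt_card.1 h2lt
      have hu1 : u ∈ T := (Finset.mem_inter.1 hu).1
      have hu2 : u ∈ T.image τ := (Finset.mem_inter.1 hu).2
      have hv1 : v ∈ T := (Finset.mem_inter.1 hv).1
      have hv2 : v ∈ T.image τ := (Finset.mem_inter.1 hv).2
      rw [hTim] at hu1 hv1
      rw [hτT'] at hu2 hv2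
      obtain ⟨i1, hi1, hui⟩ := Finset.mem_image.1 hu1
      obtain ⟨j1, hj1, huj⟩ := Finset.mem_image.1 hu2
      obtain ⟨i2, hi2, hvi⟩ := Finset.mem_image.1 hv1
      obtain ⟨j2, hj2, hvj⟩ := Finset.mem_image.1 hv2
      have hine : i1 ≠ i2 := by
        intro h
        subst h
        exact huv (hui.symm.trans hvi)
      have hjne : j1 ≠ j2 := by
        intro h
        subst h
        exact huv (huj.symm.trans hvj)
      have hkey : ∀ (i j : ℕ), a * c ^ i = a * e * (c * w) ^ j →
          c ^ (i : ℤ) = e * (c * w) ^ (j : ℤ) := by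
        intro i j hij
        have h4 := congrArg (fun g => a⁻¹ * g) hij
        rw [show a⁻¹ * (a * c ^ i) = c ^ i from by group,
          show a⁻¹ * (a * e * (c * w) ^ j) = e * (c * w) ^ j from by group] at h4
        rw [← zpow_natCast c i, ← zpow_natCast (c * w) j] at h4
        exact h4
      have hkey1 := hkey i1 j1 (hui.trans huj.symm)
      have hkey2 := hkey i2 j2 (hvi.trans hvj.symm)
      set p : ℤ := (i1 : ℤ) - i2 with hp
      set q : ℤ := (j1 : ℤ) - j2 with hq
      have hpq : c ^ p = (c * w) ^ q := by
        rw [hp, hq, zpow_sub, zpow_sub, hkey1, hkey2]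
        calc e * (c*w) ^ (j1:ℤ) * (e * (c*w) ^ (j2:ℤ))⁻¹
            = e * ((c*w) ^ (j1:ℤ) * ((c*w) ^ (j2:ℤ))⁻¹) * e⁻¹ := by group
          _ = ((c*w) ^ (j1:ℤ) * ((c*w) ^ (j2:ℤ))⁻¹) * e * e⁻¹ := by
              rw [hecomm ((c*w) ^ (j1:ℤ) * ((c*w) ^ (j2:ℤ))⁻¹)]
          _ = (c*w) ^ (j1:ℤ) * ((c*w) ^ (j2:ℤ))⁻¹ := by group
      have hwp : w ^ p = w ^ q := by
        have h5 : Z (c ^ p) = w ^ p := hZ_zpow c p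
        have h6 : Z ((c * w) ^ q) = w ^ q := by
          rw [hZ_zpow, hZ_mul, hZ_one_of_center w hwcen, mul_one]
        rw [← h5, hpq, h6]
      by_cases hppq : p = q
      · have h7 : (c * w) ^ q = c ^ q * w ^ q := hcwC.mul_zpow q
        rw [h7, ← hppq] at hpq
        have h8 : w ^ p = 1 := by
          have h9 := hpq.symm
          rwa [mul_eq_left] at h9
        have hp0 : p ≠ 0 := by
          rw [hp]
          intro hcon3
          apply hine
          omega
        exact tf_int htf w p hp0 h8
      · have h8 : w ^ (p - q) = 1 := by
          rw [zpow_sub, hwp, mul_inv_cancel]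
        exact tf_int htf w (p - q) (sub_ne_zero.2 hppq) h8
  have hτTe : T.image τ = (Finset.range (m+1)).image (fun i : ℕ => a * e * c ^ i) := by
    rw [hτT]
    apply Finset.image_congr
    intro i hi
    dsimp
    rw [hw1, one_pow, mul_one, mul_assoc a (c ^ i) e, hecomm (c ^ i), ← mul_assoc]
  have hene : e ≠ 1 := by
    intro h1
    apply hNONAB
    intro t ht
    apply (hZ_iff t).1
    rw [hTim] at ht
    obtain ⟨i, hi, rfl⟩ := Finset.mem_image.1 ht
    rw [hZ_mul, hZ_pow]
    show e * w ^ i = 1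
    rw [h1, hw1, one_pow, one_mul]
  have h1lt : 0 < (T ∩ T.image τ).card := by omega
  obtain ⟨u, hu⟩ := Finset.card_pos.1 h1lt
  have hu1 : u ∈ T := (Finset.mem_inter.1 hu).1
  have hu2 : u ∈ T.image τ := (Finset.mem_inter.1 hu).2
  rw [hTim] at hu1
  rw [hτTe] at hu2
  obtain ⟨i0, hi0, hui⟩ := Finset.mem_image.1 hu1
  obtain ⟨j0, hj0, huj⟩ := Finset.mem_image.1 hu2
  have heq0 : a * c ^ i0 = a * e * c ^ j0 := hui.trans huj.symm
  set mi : ℤ := (i0 : ℤ) - (j0 : ℤ) with hmi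
  have hecm : e = c ^ mi := by
    have h4 := congrArg (fun g => a⁻¹ * g) heq0
    rw [show a⁻¹ * (a * c ^ i0) = c ^ i0 from by group,
      show a⁻¹ * (a * e * c ^ j0) = e * c ^ j0 from by group] at h4
    have h5 : e = c ^ i0 * (c ^ j0)⁻¹ := by
      rw [h4]
      group
    rw [h5, hmi, zpow_sub, zpow_natCast, zpow_natCast]
  have hmi0 : mi ≠ 0 := by
    intro h
    rw [h, zpow_zero] at hecm
    exact hene hecm
  set f : ℤ → G := fun i => a * c ^ i with hf
  have hfinj : Function.Injective f := by
    intro p q h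
    exact hcpow_inj p q (mul_left_cancel h)
  set J : Finset ℤ := (Finset.range (m+1)).image (fun i : ℕ => (i : ℤ)) with hJ
  have hJcard : J.card = m + 1 := by
    rw [hJ, Finset.card_image_of_injective _ (fun a b h => by simpa using h : Function.Injective (fun i : ℕ => (i:ℤ))), Finset.card_range]
  have hJle : ∀ z ∈ J, (0:ℤ) ≤ z ∧ z ≤ (m:ℤ) := by
    intro z hz
    rw [hJ] at hz
    obtain ⟨i, hi, rfl⟩ := Finset.mem_image.1 hz
    rw [Finset.mem_range] at hi
    constructor
    · exact Int.natCast_nonneg i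
    · exact_mod_cast (by omega : i ≤ m)
  have hTJ : T = J.image f := by
    rw [hTim, hJ, Finset.image_image]
    apply Finset.image_congr
    intro i hi
    dsimp [f]
    rw [zpow_natCast]
  have hτTJ : T.image τ = (J.image (fun z => z + mi)).image f := by
    rw [hτTe, hJ, Finset.image_image, Finset.image_image]
    apply Finset.image_congr
    intro i hi
    dsimp [f]
    rw [hecm, mul_assoc, ← zpow_natCast c i, ← zpow_add, add_comm]
  have hJUcard : (J ∪ J.image (fun z => z + mi)).card = m + 2 := by
    have h1 : (T ∪ T.image τ) = (J ∪ J.image (fun z => z + mi)).image f := by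
      rw [hτTJ, hTJ, Finset.image_union]
    rw [h1, Finset.card_image_of_injective _ hfinj] at hVcard
    exact hVcard
  have hmem_shift : ∀ z : ℤ, z ∈ J → z + mi ∈ J.image (fun z => z + mi) :=
    fun z hz => Finset.mem_image.2 ⟨z, hz, rfl⟩
  have hmemJ : ∀ i : ℕ, i ≤ m → (i : ℤ) ∈ J := by
    intro i hi
    rw [hJ]
    exact Finset.mem_image.2 ⟨i, Finset.mem_range.2 (by omega), rfl⟩
  have hmi1 : mi = 1 ∨ mi = -1 := by
    by_contra hcon2
    push_neg at hcon2
    obtain ⟨hn1, hnm1⟩ := hcon2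
    have hcases : 2 ≤ mi ∨ mi ≤ -2 := by omega
    have htoobig : ∀ z1 z2 : ℤ, z1 ∈ J ∪ J.image (fun z => z + mi) →
        z2 ∈ J ∪ J.image (fun z => z + mi) → z1 ≠ z2 → z1 ∉ J → z2 ∉ J → False := by
      intro z1 z2 h1 h2 hne hz1 hz2
      have hsub : insert z1 (insert z2 J) ⊆ J ∪ J.image (fun z => z + mi) := by
        intro z hz
        simp only [Finset.mem_insert] at hz
        rcases hz with rfl | rfl | hz
        · exact h1
        · exact h2
        · exact Finset.mem_union_left _ hz
      have hc3 : (insert z1 (insert z2 J)).card = m + 3 := by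
        rw [Finset.card_insert_of_notMem, Finset.card_insert_of_notMem hz2, hJcard]
        simp only [Finset.mem_insert]
        push_neg
        exact ⟨hne, hz1⟩
      have := Finset.card_le_card hsub
      rw [hc3, hJUcard] at this
      omega
    rcases hcases with hmi2 | hmi2
    · apply htoobig ((m:ℤ) + mi) (((m:ℤ) - 1) + mi)
      · exact Finset.mem_union_right _ (hmem_shift _ (hmemJ m le_rfl))
      · have : ((m:ℤ) - 1) = ((m - 1 : ℕ) : ℤ) := by push_cast; omega
        rw [this]
        exact Finset.mem_union_right _ (hmem_shift _ (hmemJ (m-1) (by omega)))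
      · omega
      · intro hmem
        have := (hJle _ hmem).2
        omega
      · intro hmem
        have := (hJle _ hmem).2
        omega
    · apply htoobig ((0:ℤ) + mi) ((1:ℤ) + mi)
      · exact Finset.mem_union_right _ (hmem_shift _ (by exact_mod_cast hmemJ 0 (by omega)))
      · exact Finset.mem_union_right _ (hmem_shift _ (by exact_mod_cast hmemJ 1 (by omega)))
      · omega
      · intro hmem
        have := (hJle _ hmem).1
        omega
      · intro hmem
        have := (hJle _ hmem).1
        omega
  have hfinal : c ∈ Subgroup.center G ∧ (x * a = a * x * c ∨ a * x = x * a * c) := by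
    rcases hmi1 with h1 | h1
    · have hec : e = c := by rw [hecm, h1, zpow_one]
      constructor
      · rw [← hec]
        exact hecen
      · right
        have h2 := hconj a
        calc a * x = x * (x⁻¹ * a * x) := by group
          _ = x * (a * Z a) := by rw [h2]
          _ = x * a * c := by rw [show Z a = e from rfl, hec]; group
    · have hec : e = c⁻¹ := by
        rw [hecm, h1]
        simp
      constructor
      · have h3 : c⁻¹ ∈ Subgroup.center G := by
          rw [← hec]
          exact hecen
        have h4 := inv_mem h3
        rwa [inv_inv] at h4
      · left
        have h2 := hconj a
        have h3 : a * x = x * a * c⁻¹ := by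
          calc a * x = x * (x⁻¹ * a * x) := by group
            _ = x * (a * Z a) := by rw [h2]
            _ = x * a * c⁻¹ := by rw [show Z a = e from rfl, hec]; group
        rw [h3]
        group
  obtain ⟨hccen, hrel⟩ := hfinal
  refine ⟨a, x, c, hcne, hccen, hrel, ?_⟩
  rw [hS]
  congr 1
  rw [hTim, show k - 1 = m + 1 from by omega]
end

section
/- Let (G, <) be an ordered group and let b ∈ G and T a finite subset of G with b ∉ C_G(T) (b fails to commute with some element of T). If ⟨T⟩ is abelian, then |bT ∪ Tb| ≥ |T| + 1. -/
open Pointwise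

lemma strictMono_image_eq_fix {G : Type*} [LinearOrder G] (f : G → G) (hf : StrictMono f) :
    ∀ (T : Finset G), T.image f = T → ∀ t ∈ T, f t = t := by
  intro T
  induction T using Finset.strongInduction with
  | _ T ih =>
    intro hT t ht
    rcases Finset.eq_empty_or_nonempty T with rfl | hne
    · simp at ht
    have hm : T.max' hne ∈ T := T.max'_mem hne
    have hfm : f (T.max' hne) = T.max' hne := by
      have h1 : f (T.max' hne) ∈ T := by
        have := Finset.mem_image_of_mem f hm; rwa [hT] at this
      -- max' is in the image, so equals f s for some s ≤ max'
      have h2 : T.max' hne ∈ T.image f := by rw [hT]; exact hm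
      obtain ⟨s, hs, hfs⟩ := Finset.mem_image.mp h2
      have hsle : s ≤ T.max' hne := T.le_max' s hs
      have : T.max' hne ≤ f (T.max' hne) := by
        calc T.max' hne = f s := hfs.symm
          _ ≤ f (T.max' hne) := hf.monotone hsle
      exact le_antisymm (T.le_max' _ h1) this
    by_cases htm : t = T.max' hne
    · rw [htm, hfm]
    · have herase : (T.erase (T.max' hne)).image f = T.erase (T.max' hne) := by
        rw [Finset.image_erase hf.injective, hT, hfm]
      exact ih (T.erase (T.max' hne)) (Finset.erase_ssubset hm) herase t
        (Finset.mem_erase.mpr ⟨htm, ht⟩)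

/-- Proposition 2.4 of [7]: in an ordered group, if `⟨T⟩` is abelian and `b` fails to
commute with some element of `T`, then `|bT ∪ Tb| ≥ |T| + 1`. -/
theorem stmt_11 {G : Type*} [Group G] [LinearOrder G]
    [CovariantClass G G (· * ·) (· < ·)]
    [CovariantClass G G (Function.swap (· * ·)) (· < ·)]
    (b : G) (T : Finset G)
    (hb : ∃ t ∈ T, b * t ≠ t * b)
    (hTab : ∀ u ∈ Subgroup.closure (T : Set G), ∀ v ∈ Subgroup.closure (T : Set G),
      u * v = v * u) :
    T.card + 1 ≤ (T.image (fun t => b * t) ∪ T.image (fun t => t * b)).card := by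
  by_contra h
  push_neg at h
  have hle : (T.image (fun t => b * t) ∪ T.image (fun t => t * b)).card ≤ T.card := by
    omega
  have hcard1 : (T.image (fun t => b * t)).card = T.card :=
    Finset.card_image_of_injective T (mul_right_injective b)
  have hcard2 : (T.image (fun t => t * b)).card = T.card :=
    Finset.card_image_of_injective T (mul_left_injective b)
  have h1 : T.image (fun t => b * t) = T.image (fun t => b * t) ∪ T.image (fun t => t * b) :=
    Finset.eq_of_subset_of_card_le Finset.subset_union_left (by omega)
  have h2 : T.image (fun t => t * b) = T.image (fun t => b * t) ∪ T.image (fun t => t * b) :=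
    Finset.eq_of_subset_of_card_le Finset.subset_union_right (by omega)
  have heq : T.image (fun t => b * t) = T.image (fun t => t * b) := h1.trans h2.symm
  have hconj : T.image (fun t => b * t * b⁻¹) = T := by
    have : T.image (fun t => b * t * b⁻¹) = (T.image (fun t => b * t)).image (fun x => x * b⁻¹) := by
      rw [Finset.image_image]; rfl
    rw [this, heq, Finset.image_image]
    ext t
    simp [mul_assoc]
  have hmono : StrictMono (fun t : G => b * t * b⁻¹) := fun x y hxy => by
    exact mul_lt_mul_left (mul_lt_mul_right hxy b) b⁻¹
  obtain ⟨t, ht, hnc⟩ := hb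
  have := strictMono_image_eq_fix _ hmono T hconj t ht
  apply hnc
  have : b * t * b⁻¹ * b = t * b := by rw [this]
  simpa using this
end

section
/- Let G be an ordered nilpotent group of class 2 and let x, y, z ∈ G with x < y < z, where y and z commute (yz = zy) but x commutes with neither y nor z. If xz = zy and zx = yz, then a contradiction follows; that is, it is impossible that {xz, zx} = {yz, zy} as ordered pairs {xz = zy, zx = yz}. -/
open Pointwise
open scoped commutatorElement

/-- Final step of Lemma 2.1: with `x < y < z`, `yz = zy`, `x` commuting with neither
`y` nor `z`, the equations `xz = zy` and `zx = yz` are contradictory. -/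
theorem stmt_13 {G : Type*} [Group G] [LinearOrder G]
    [CovariantClass G G (· * ·) (· < ·)]
    [CovariantClass G G (Function.swap (· * ·)) (· < ·)]
    (hG : ∀ x y : G, ⁅x, y⁆ ∈ Subgroup.center G)
    (x y z : G) (hxy : x < y) (hyz : y < z)
    (hcomm : y * z = z * y)
    (hncy : x * y ≠ y * x) (hncz : x * z ≠ z * x)
    (h1 : x * z = z * y) (h2 : z * x = y * z) :
    False := by
  have key : x * z * z = z * z * x := by
    rw [h1, mul_assoc, ← h2, ← mul_assoc]
  set c := ⁅x, z⁆ with hc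
  have hcen := (Subgroup.mem_center_iff.mp (hG x z))
  have hxz : x * z = c * (z * x) := by
    simp [hc, commutatorElement_def, mul_assoc]
  rw [← hc] at hcen
  have hc2 : c * c = 1 := by
    have e : c * c * (z * z * x) = z * z * x := by
      calc c * c * (z * z * x) = c * ((c * z) * (z * x)) := by group
        _ = c * ((z * c) * (z * x)) := by rw [← hcen z]
        _ = c * (z * (c * (z * x))) := by rw [mul_assoc]
        _ = c * (z * (x * z)) := by rw [← hxz]
        _ = (c * (z * x)) * z := by group
        _ = (x * z) * z := by rw [← hxz]
        _ = z * z * x := key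
    nth_rewrite 2 [← one_mul (z * z * x)] at e
    exact mul_right_cancel e
  rcases lt_trichotomy c 1 with h | h | h
  · exact absurd hc2 (by rw [← mul_one 1]; exact (mul_lt_mul_of_lt_of_lt h h).ne)
  · exact hncz (by have := hxz; rw [h, one_mul] at this; exact this)
  · exact absurd hc2 (by rw [← mul_one 1]; exact (mul_lt_mul_of_lt_of_lt h h).ne')
end

section
/- Let G be an ordered nilpotent group of class 2, a, b, c ∈ G with c ∈ Z(G), c > 1, ab ≠ ba and either ba = abc or ba = abc⁻¹. Then for S = {a, ac, b, bc²}, one has |S²| = 11 = 3|S| - 1. -/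
open Pointwise
open scoped commutatorElement

theorem count_aux {G : Type*} [Group G] [LinearOrder G]
    [CovariantClass G G (· * ·) (· < ·)]
    (a b c t : G) (hc : c ∈ Subgroup.center G) (hc1 : 1 < c)
    (hab : a * b ≠ b * a)
    (htz : ∃ z ∈ Subgroup.center G, t = a * b * z)
    (hsq : ∀ z ∈ Subgroup.center G, a * a ≠ b * (b * z)) :
    (Finset.image (fun p : ℕ × ℕ =>
        (if p.1 = 0 then a * a else if p.1 = 1 then t else b * b) * c ^ p.2)
      {(0,0),(0,1),(0,2),(1,0),(1,1),(1,2),(1,3),(1,4),(2,0),(2,2),(2,4)}).card = 11 := by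
  obtain ⟨z, hzc, rfl⟩ := htz
  have hcomm : ∀ w : G, w ∈ Subgroup.center G → ∀ x : G, w * x = x * w :=
    fun w hw x => (Subgroup.mem_center_iff.mp hw x).symm
  have hpow : ∀ {m n : ℕ}, c ^ m = c ^ n → m = n :=
    fun h => (pow_right_strictMono' hc1).injective h
  have cpow : ∀ m : ℕ, c ^ m ∈ Subgroup.center G := fun m => pow_mem hc m
  have hL1 : ∀ w ∈ Subgroup.center G, a ≠ b * w := by
    intro w hw h
    apply hab
    rw [h, mul_assoc, hcomm w hw b, ← mul_assoc]
  have hL1' : ∀ w ∈ Subgroup.center G, b ≠ a * w := by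
    intro w hw h
    apply hab
    rw [h, mul_assoc, ← hcomm w hw a, ← mul_assoc]
  have key : ∀ i j m n : ℕ, i ≤ 2 → j ≤ 2 →
      (if i = 0 then a * a else if i = 1 then a * b * z else b * b) * c ^ m =
      (if j = 0 then a * a else if j = 1 then a * b * z else b * b) * c ^ n →
      i = j ∧ m = n := by
    intro i j m n hi hj h
    interval_cases i <;> interval_cases j <;> norm_num at h ⊢
    -- (0,0)
    · exact hpow h
    -- (0,1)
    · 
      have h2 : a * (b * (z * (c ^ n * (c ^ m)⁻¹))) * c ^ m = a * a * c ^ m := by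
        rw [h]; group
      exact hL1 _ (mul_mem hzc (mul_mem (cpow n) (inv_mem (cpow m))))
        (mul_left_cancel (mul_right_cancel h2)).symm
    -- (0,2)
    · 
      have h2 : b * (b * (c ^ n * (c ^ m)⁻¹)) * c ^ m = a * a * c ^ m := by
        rw [h]; group
      exact hsq _ (mul_mem (cpow n) (inv_mem (cpow m))) (mul_right_cancel h2).symm
    -- (1,0)
    · 
      have h2 : a * (b * (z * (c ^ m * (c ^ n)⁻¹))) * c ^ n = a * a * c ^ n := by
        rw [← h]; group
      exact hL1 _ (mul_mem hzc (mul_mem (cpow m) (inv_mem (cpow n))))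
        (mul_left_cancel (mul_right_cancel h2)).symm
    -- (1,1)
    · exact hpow h
    -- (1,2)
    · 
      have hzc' := mul_mem hzc (mul_mem (cpow m) (inv_mem (cpow n)))
      have h2 : (a * (z * (c ^ m * (c ^ n)⁻¹))) * b * c ^ n = b * b * c ^ n := by
        rw [← h, mul_assoc a _ b, hcomm _ hzc' b]; group
      exact hL1' _ hzc' (mul_right_cancel (mul_right_cancel h2)).symm
    -- (2,0)
    · 
      have h2 : b * (b * (c ^ m * (c ^ n)⁻¹)) * c ^ n = a * a * c ^ n := by
        rw [← h]; group
      exact hsq _ (mul_mem (cpow m) (inv_mem (cpow n))) (mul_right_cancel h2).symm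
    -- (2,1)
    · 
      have hzc' := mul_mem hzc (mul_mem (cpow n) (inv_mem (cpow m)))
      have h2 : (a * (z * (c ^ n * (c ^ m)⁻¹))) * b * c ^ m = b * b * c ^ m := by
        rw [h, mul_assoc a _ b, hcomm _ hzc' b]; group
      exact hL1' _ hzc' (mul_right_cancel (mul_right_cancel h2)).symm
    -- (2,2)
    · exact hpow h
  rw [Finset.card_image_of_injOn]
  · decide
  · rintro ⟨i, m⟩ hp ⟨j, n⟩ hq h
    simp only [Finset.coe_insert, Set.mem_insert_iff, Finset.coe_singleton,
      Set.mem_singleton_iff, Prod.mk.injEq] at hp hq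
    have hi : i ≤ 2 := by omega
    have hj : j ≤ 2 := by omega
    obtain ⟨h1, h2⟩ := key i j m n hi hj h
    cases h1; cases h2; rfl

set_option maxHeartbeats 1000000 in
theorem hST1_aux {G : Type*} [Group G] [LinearOrder G]
    (a b c : G)
    (e1' : c * a = a * c) (e2' : c * b = b * c)
    (e1 : ∀ x : G, c * (a * x) = a * (c * x))
    (e2 : ∀ x : G, c * (b * x) = b * (c * x))
    (e3' : b * a = a * (b * c))
    (e3 : ∀ x : G, b * (a * x) = a * (b * (c * x))) :
    ({a, a * c, b, b * c ^ 2} : Finset G) * {a, a * c, b, b * c ^ 2} =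
      Finset.image (fun p : ℕ × ℕ =>
        (if p.1 = 0 then a * a else if p.1 = 1 then a * b else b * b) * c ^ p.2)
      {(0,0),(0,1),(0,2),(1,0),(1,1),(1,2),(1,3),(1,4),(2,0),(2,2),(2,4)} := by
  ext x
  simp only [Finset.insert_eq, Finset.union_mul, Finset.mul_union,
    Finset.singleton_mul_singleton, Finset.image_insert, Finset.image_singleton]
  simp [mul_assoc, pow_succ, e1, e2, e3, e1', e2', e3']
  tauto

set_option maxHeartbeats 1000000 in
theorem hST2_aux {G : Type*} [Group G] [LinearOrder G]
    (a b c : G)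
    (e1' : c * a = a * c) (e2' : c * b = b * c)
    (e1 : ∀ x : G, c * (a * x) = a * (c * x))
    (e2 : ∀ x : G, c * (b * x) = b * (c * x))
    (e3' : b * a = a * (b * c⁻¹))
    (e3 : ∀ x : G, b * (a * x) = a * (b * (c⁻¹ * x))) :
    ({a, a * c, b, b * c ^ 2} : Finset G) * {a, a * c, b, b * c ^ 2} =
      Finset.image (fun p : ℕ × ℕ =>
        (if p.1 = 0 then a * a else if p.1 = 1 then a * b * c⁻¹ else b * b) * c ^ p.2)
      {(0,0),(0,1),(0,2),(1,0),(1,1),(1,2),(1,3),(1,4),(2,0),(2,2),(2,4)} := by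
  ext x
  simp only [Finset.insert_eq, Finset.union_mul, Finset.mul_union,
    Finset.singleton_mul_singleton, Finset.image_insert, Finset.image_singleton]
  simp [mul_assoc, pow_succ, e1, e2, e3, e1', e2', e3']
  tauto

set_option maxHeartbeats 800000 in
/-- The excluded example: if `c ∈ Z(G)`, `c > 1`, `ab ≠ ba` and `ba = abc` or
`ba = abc⁻¹`, then `S = {a, ac, b, bc²}` has `|S²| = 11 = 3|S| - 1`. -/
theorem stmt_14 {G : Type*} [Group G] [LinearOrder G]
    [CovariantClass G G (· * ·) (· < ·)]
    [CovariantClass G G (Function.swap (· * ·)) (· < ·)]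
    (hG : ∀ x y : G, ⁅x, y⁆ ∈ Subgroup.center G)
    (a b c : G) (hc : c ∈ Subgroup.center G) (hc1 : 1 < c)
    (hab : a * b ≠ b * a)
    (hba : b * a = a * b * c ∨ b * a = a * b * c⁻¹)
    (S : Finset G) (hS : S = {a, a * c, b, b * c ^ 2}) :
    (S * S).card = 11 ∧ (S * S).card = 3 * S.card - 1 := by
  subst hS
  have hcomm : ∀ w : G, w ∈ Subgroup.center G → ∀ x : G, w * x = x * w :=
    fun w hw x => (Subgroup.mem_center_iff.mp hw x).symm
  have hpow : ∀ {m n : ℕ}, c ^ m = c ^ n → m = n :=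
    fun h => (pow_right_strictMono' hc1).injective h
  have hccne : c * c ≠ 1 := (hc1.trans (by simpa using mul_lt_mul_right hc1 c)).ne'
  have hL1 : ∀ w ∈ Subgroup.center G, a ≠ b * w := by
    intro w hw h
    apply hab
    rw [h, mul_assoc, hcomm w hw b, ← mul_assoc]
  -- |S| = 4
  have n1 : a ∉ ({a * c, b, b * c ^ 2} : Finset G) := by
    simp only [Finset.mem_insert, Finset.mem_singleton]
    push_neg
    refine ⟨fun h => hc1.ne' (left_eq_mul.mp h), fun h => hab (by rw [h]),
      hL1 _ (pow_mem hc 2)⟩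
  have n2 : a * c ∉ ({b, b * c ^ 2} : Finset G) := by
    simp only [Finset.mem_insert, Finset.mem_singleton]
    push_neg
    refine ⟨fun h => hL1 c⁻¹ (inv_mem hc) (by rw [← h]; group),
      fun h => hL1 (c ^ 2 * c⁻¹) (mul_mem (pow_mem hc 2) (inv_mem hc))
        (by rw [← mul_assoc, ← h]; group)⟩
  have n3 : b ∉ ({b * c ^ 2} : Finset G) := by
    simp only [Finset.mem_singleton]
    intro h
    have h2 : c ^ 2 = c ^ 0 := (left_eq_mul.mp h).trans (pow_zero c).symm
    exact absurd (hpow h2) (by omega)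
  have hcard4 : ({a, a * c, b, b * c ^ 2} : Finset G).card = 4 := by
    rw [Finset.card_insert_of_notMem n1, Finset.card_insert_of_notMem n2,
      Finset.card_insert_of_notMem n3, Finset.card_singleton]
  have e1' : c * a = a * c := hcomm c hc a
  have e2' : c * b = b * c := hcomm c hc b
  have e1 : ∀ x : G, c * (a * x) = a * (c * x) := fun x => by
    rw [← mul_assoc, e1', mul_assoc]
  have e2 : ∀ x : G, c * (b * x) = b * (c * x) := fun x => by
    rw [← mul_assoc, e2', mul_assoc]
  have h11 : (({a, a * c, b, b * c ^ 2} : Finset G) * {a, a * c, b, b * c ^ 2}).card = 11 := by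
    rcases hba with h | h
    · -- case  b * a = a * b * c
      have e3' : b * a = a * (b * c) := by rw [h, mul_assoc]
      have e3 : ∀ x : G, b * (a * x) = a * (b * (c * x)) := fun x => by
        rw [← mul_assoc, h, mul_assoc, mul_assoc]
      have hsq : ∀ z ∈ Subgroup.center G, a * a ≠ b * (b * z) := by
        intro z hz heq
        have k1 : b * (a * a) = a * (a * (b * (c * c))) := by rw [e3, e1', e3]
        have k2 : b * (a * a) = a * (a * b) :=
          calc b * (a * a) = b * (b * (b * z)) := by rw [heq]
            _ = b * (b * z) * b := by
                rw [mul_assoc b (b * z) b, mul_assoc b z b, hcomm z hz b]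
            _ = a * a * b := by rw [heq]
            _ = a * (a * b) := mul_assoc _ _ _
        have k3 : b * (c * c) = b := mul_left_cancel (mul_left_cancel (k1.symm.trans k2))
        exact hccne (mul_left_cancel (k3.trans (mul_one b).symm))
      rw [hST1_aux a b c e1' e2' e1 e2 e3' e3]
      exact count_aux a b c (a * b) hc hc1 hab ⟨1, one_mem _, (mul_one _).symm⟩ hsq
    · -- case  b * a = a * b * c⁻¹
      have e1i : c⁻¹ * a = a * c⁻¹ := hcomm c⁻¹ (inv_mem hc) a
      have e3' : b * a = a * (b * c⁻¹) := by rw [h, mul_assoc]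
      have e3 : ∀ x : G, b * (a * x) = a * (b * (c⁻¹ * x)) := fun x => by
        rw [← mul_assoc, h, mul_assoc, mul_assoc]
      have hsq : ∀ z ∈ Subgroup.center G, a * a ≠ b * (b * z) := by
        intro z hz heq
        have k1 : b * (a * a) = a * (a * (b * (c⁻¹ * c⁻¹))) := by rw [e3, e1i, e3]
        have k2 : b * (a * a) = a * (a * b) :=
          calc b * (a * a) = b * (b * (b * z)) := by rw [heq]
            _ = b * (b * z) * b := by
                rw [mul_assoc b (b * z) b, mul_assoc b z b, hcomm z hz b]
            _ = a * a * b := by rw [heq]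
            _ = a * (a * b) := mul_assoc _ _ _
        have k3 : b * (c⁻¹ * c⁻¹) = b := mul_left_cancel (mul_left_cancel (k1.symm.trans k2))
        have k4 : c⁻¹ * c⁻¹ = 1 := mul_left_cancel (k3.trans (mul_one b).symm)
        rw [← mul_inv_rev] at k4
        exact hccne (inv_eq_one.mp k4)
      rw [hST2_aux a b c e1' e2' e1 e2 e3' e3]
      exact count_aux a b c (a * b * c⁻¹) hc hc1 hab ⟨c⁻¹, inv_mem hc, rfl⟩ hsq
  exact ⟨h11, by rw [h11, hcard4]⟩
end

section
/- Let (G, <) be an ordered nilpotent group of class 2, and let T = {x_1, ..., x_{k-1}} with x_1 < ... < x_{k-1} generate an abelian subgroup, and let x_k > x_{k-1} with x_k ∉ C_G(T). Then S² = T² ∪ {x_k²} ∪ (x_kT ∪ Tx_k) is a disjoint union (the three pieces are pairwise disjoint), where S = T ∪ {x_k}. -/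
open Pointwise
open scoped commutatorElement

/-- The decomposition `S² = T² ∪ {x_k²} ∪ (x_kT ∪ Tx_k)` is a disjoint union when
`⟨T⟩` is abelian, `x_k` exceeds every element of `T` and `x_k ∉ C_G(T)`. -/
theorem stmt_15 {G : Type*} [Group G] [LinearOrder G]
    [CovariantClass G G (· * ·) (· < ·)]
    [CovariantClass G G (Function.swap (· * ·)) (· < ·)]
    (hG : ∀ x y : G, ⁅x, y⁆ ∈ Subgroup.center G)
    (T : Finset G) (xk : G)
    (hgt : ∀ t ∈ T, t < xk)
    (hTab : ∀ u ∈ Subgroup.closure (T : Set G), ∀ v ∈ Subgroup.closure (T : Set G),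
      u * v = v * u)
    (hnc : ∃ t ∈ T, xk * t ≠ t * xk)
    (S : Finset G) (hS : S = insert xk T) :
    S * S = (T * T) ∪ {xk * xk} ∪ (T.image (fun t => xk * t) ∪ T.image (fun t => t * xk)) ∧
    Disjoint (T * T) ({xk * xk} : Finset G) ∧
    Disjoint (T * T) (T.image (fun t => xk * t) ∪ T.image (fun t => t * xk)) ∧
    Disjoint ({xk * xk} : Finset G)
      (T.image (fun t => xk * t) ∪ T.image (fun t => t * xk)) := by
  obtain ⟨t0, ht0, ht0ne⟩ := hnc
  have ht0c : (t0 : G) ∈ Subgroup.closure (T : Set G) :=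
    Subgroup.subset_closure ht0
  -- xk is not in the closure of T
  have hxknc : xk ∉ Subgroup.closure (T : Set G) := fun hx =>
    ht0ne (hTab xk hx t0 ht0c)
  constructor
  · ext x
    simp only [hS, Finset.mem_mul, Finset.mem_insert, Finset.mem_union,
      Finset.mem_singleton, Finset.mem_image]
    constructor
    · rintro ⟨a, (rfl | ha), b, (rfl | hb), rfl⟩
      · exact Or.inl (Or.inr rfl)
      · exact Or.inr (Or.inl ⟨b, hb, rfl⟩)
      · exact Or.inr (Or.inr ⟨a, ha, rfl⟩)
      · exact Or.inl (Or.inl ⟨a, ha, b, hb, rfl⟩)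
    · rintro ((⟨a, ha, b, hb, rfl⟩ | rfl) | (⟨t, ht, rfl⟩ | ⟨t, ht, rfl⟩))
      · exact ⟨a, Or.inr ha, b, Or.inr hb, rfl⟩
      · exact ⟨xk, Or.inl rfl, xk, Or.inl rfl, rfl⟩
      · exact ⟨xk, Or.inl rfl, t, Or.inr ht, rfl⟩
      · exact ⟨t, Or.inr ht, xk, Or.inl rfl, rfl⟩
  refine ⟨?_, ?_, ?_⟩
  · -- T*T disjoint from {xk*xk}
    rw [Finset.disjoint_singleton_right]
    intro h
    rw [Finset.mem_mul] at h
    obtain ⟨a, ha, b, hb, hab⟩ := h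
    -- xk*xk commutes with t0
    have hab' : (a * b : G) ∈ Subgroup.closure (T : Set G) :=
      mul_mem (Subgroup.subset_closure ha) (Subgroup.subset_closure hb)
    have hcomm : xk * xk * t0 = t0 * (xk * xk) := by
      rw [← hab]; exact hTab _ hab' _ ht0c
    have hcz := hG xk t0
    rw [Subgroup.mem_center_iff] at hcz
    have hxc : xk * ⁅xk, t0⁆ = ⁅xk, t0⁆ * xk := hcz xk
    have hswap : xk * t0 = ⁅xk, t0⁆ * (t0 * xk) := by
      simp [commutatorElement_def, mul_assoc]
    have h1 : xk * xk * t0 = ⁅xk, t0⁆ * ⁅xk, t0⁆ * (t0 * (xk * xk)) := by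
      calc xk * xk * t0 = xk * (xk * t0) := by rw [mul_assoc]
        _ = xk * (⁅xk, t0⁆ * (t0 * xk)) := by rw [hswap]
        _ = (xk * ⁅xk, t0⁆) * (t0 * xk) := by rw [mul_assoc]
        _ = (⁅xk, t0⁆ * xk) * (t0 * xk) := by rw [hxc]
        _ = ⁅xk, t0⁆ * ((xk * t0) * xk) := by simp [mul_assoc]
        _ = ⁅xk, t0⁆ * ((⁅xk, t0⁆ * (t0 * xk)) * xk) := by rw [hswap]
        _ = ⁅xk, t0⁆ * ⁅xk, t0⁆ * (t0 * (xk * xk)) := by simp [mul_assoc]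
    have hcc : ⁅xk, t0⁆ * ⁅xk, t0⁆ = 1 := by
      have h2 : t0 * (xk * xk) = ⁅xk, t0⁆ * ⁅xk, t0⁆ * (t0 * (xk * xk)) := by
        rw [← h1, hcomm]
      exact right_eq_mul.mp h2
    have hc1 : ⁅xk, t0⁆ = 1 := by
      rcases lt_trichotomy ⁅xk, t0⁆ 1 with h | h | h
      · have h3 : ⁅xk, t0⁆ * ⁅xk, t0⁆ < ⁅xk, t0⁆ * 1 := mul_lt_mul_right h _
        rw [mul_one] at h3
        exact absurd hcc (h3.trans h).ne
      · exact h
      · have h3 : ⁅xk, t0⁆ * 1 < ⁅xk, t0⁆ * ⁅xk, t0⁆ := mul_lt_mul_right h _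
        rw [mul_one] at h3
        exact absurd hcc (h.trans h3).ne'
    apply ht0ne
    rw [hswap, hc1, one_mul]
  · -- T*T disjoint from xk*T ∪ T*xk
    rw [Finset.disjoint_union_right]
    constructor <;>
    · rw [Finset.disjoint_left]
      rintro x hx hx'
      rw [Finset.mem_mul] at hx
      obtain ⟨a, ha, b, hb, hab⟩ := hx
      rw [Finset.mem_image] at hx'
      obtain ⟨t, ht, hteq⟩ := hx'
      apply hxknc
      have hac := Subgroup.subset_closure (k := (T : Set G)) ha
      have hbc := Subgroup.subset_closure (k := (T : Set G)) hb
      have htc := Subgroup.subset_closure (k := (T : Set G)) ht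
      first
      | · have : xk = a * b * t⁻¹ := by
            rw [hab, ← hteq]; group
          rw [this]; exact mul_mem (mul_mem hac hbc) (inv_mem htc)
      | · have : xk = t⁻¹ * (a * b) := by
            rw [hab, ← hteq]; group
          rw [this]; exact mul_mem (inv_mem htc) (mul_mem hac hbc)
  · -- {xk*xk} disjoint from xk*T ∪ T*xk
    rw [Finset.disjoint_union_right]
    constructor <;>
    · rw [Finset.disjoint_left]
      rintro x hx hx'
      rw [Finset.mem_singleton] at hx
      rw [Finset.mem_image] at hx'
      obtain ⟨t, ht, hteq⟩ := hx'
      have : xk = t := by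
        subst hx
        first
        | exact mul_left_cancel hteq.symm
        | exact mul_right_cancel hteq.symm
      exact hxknc (this ▸ Subgroup.subset_closure ht)
end

section
/- Let G be a group of nilpotency class 2 and let a, b, c ∈ G satisfy b⁻¹a⁻¹ba·c^l = b⁻¹c^j b (equivalently ba·c^l = a·c^j·b) for integers l ≠ j, with a, c commuting. Then c^{j-l} ∈ Z(⟨a,b,c⟩), and if moreover G is torsion-free then c ∈ Z(⟨a,b,c⟩) and either ab = ba·c^{l-j} (if l > j) or ba = ab·c^{j-l} (if j > l). -/
open Pointwise
open scoped commutatorElement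

/-- From `ba·c^l = a·c^j·b` with `l ≠ j` and `ac = ca` in a class-2 group:
`c^(j-l)` is central in `⟨a,b,c⟩`; if moreover `G` is torsion-free then `c` itself is
central in `⟨a,b,c⟩` and `ab = ba·c^(l-j)` (if `l > j`) or `ba = ab·c^(j-l)` (if `j > l`). -/
theorem stmt_16 {G : Type*} [Group G]
    (hG : ∀ x y : G, ⁅x, y⁆ ∈ Subgroup.center G)
    (a b c : G) (hac : a * c = c * a)
    (l j : ℤ) (hlj : l ≠ j)
    (h : b * a * c ^ l = a * c ^ j * b) :
    (∀ g ∈ Subgroup.closure ({a, b, c} : Set G),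
      g * c ^ (j - l) = c ^ (j - l) * g) ∧
    ((∀ (g : G) (n : ℕ), 0 < n → g ^ n = 1 → g = 1) →
      (∀ g ∈ Subgroup.closure ({a, b, c} : Set G), g * c = c * g) ∧
      (j < l → a * b = b * a * c ^ (l - j)) ∧
      (l < j → b * a = a * b * c ^ (j - l))) := by
  have hcomm : ∀ x y g : G, g * ⁅x, y⁆ = ⁅x, y⁆ * g := fun x y g =>
    Subgroup.mem_center_iff.mp (hG x y) g
  have hacn : ∀ n : ℤ, a * c ^ n = c ^ n * a := fun n => (Commute.zpow_right hac n)
  have hBA : b * a = a * c ^ j * b * (c ^ l)⁻¹ := eq_mul_inv_of_mul_eq h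
  set z : G := ⁅b, (c ^ l)⁻¹⁆ with hzdef
  have key : c ^ (j - l) = z⁻¹ * ⁅b, a⁆ := by
    have e1 : ⁅b, a⁆ = a * c ^ j * ((b * (c ^ l)⁻¹ * b⁻¹) * a⁻¹) := by
      rw [commutatorElement_def, hBA]; group
    have e2 : b * (c ^ l)⁻¹ * b⁻¹ = z * (c ^ l)⁻¹ := by
      rw [hzdef, commutatorElement_def]; group
    have e3 : a * c ^ j * ((z * (c ^ l)⁻¹) * a⁻¹) = z * (a * c ^ j * ((c ^ l)⁻¹ * a⁻¹)) := by
      calc a * c ^ j * ((z * (c ^ l)⁻¹) * a⁻¹)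
          = (a * c ^ j) * z * ((c ^ l)⁻¹ * a⁻¹) := by group
        _ = z * (a * c ^ j) * ((c ^ l)⁻¹ * a⁻¹) := by rw [hcomm]
        _ = z * (a * c ^ j * ((c ^ l)⁻¹ * a⁻¹)) := by group
    rw [e1, e2, e3, inv_mul_cancel_left]
    have : a * c ^ j * ((c ^ l)⁻¹ * a⁻¹) = a * c ^ (j - l) * a⁻¹ := by
      rw [zpow_sub]; group
    rw [this, hacn (j - l)]; group
  have hcentral : c ^ (j - l) ∈ Subgroup.center G := by
    rw [key]
    exact (Subgroup.center G).mul_mem ((Subgroup.center G).inv_mem (hG b (c ^ l)⁻¹)) (hG b a)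
  have hcpow : ∀ g : G, g * c ^ (j - l) = c ^ (j - l) * g := fun g =>
    Subgroup.mem_center_iff.mp hcentral g
  refine ⟨fun g _ => hcpow g, fun tf => ?_⟩
  -- c is central
  have hcc : ∀ x : G, x * c = c * x := by
    intro x
    have hz : ∀ g : G, g * ⁅x, c⁆ = ⁅x, c⁆ * g := fun g =>
      Subgroup.mem_center_iff.mp (hG x c) g
    have hzc : Commute ⁅x, c⁆ c := (hz c).symm
    have hconj : x * c * x⁻¹ = ⁅x, c⁆ * c := by rw [commutatorElement_def]; group
    have hconjn : x * c ^ (j - l) * x⁻¹ = ⁅x, c⁆ ^ (j - l) * c ^ (j - l) := by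
      rw [← hzc.mul_zpow, ← hconj]
      rw [conj_zpow]
    have hpow1 : ⁅x, c⁆ ^ (j - l) = 1 := by
      have hx : x * c ^ (j - l) * x⁻¹ = c ^ (j - l) := by
        rw [hcpow x]; group
      rw [hx] at hconjn
      exact mul_right_cancel (hconjn.symm.trans (one_mul (c ^ (j - l))).symm)
    have hne : j - l ≠ 0 := sub_ne_zero.mpr (Ne.symm hlj)
    have hz1 : ⁅x, c⁆ = 1 := by
      rcases lt_or_gt_of_ne hne with hn | hn
      · have : ⁅x, c⁆ ^ (l - j) = 1 := by
          have : ⁅x, c⁆ ^ (l - j) = (⁅x, c⁆ ^ (j - l))⁻¹ := by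
            rw [← zpow_neg]; ring_nf
          rw [this, hpow1, inv_one]
        have hnat : ⁅x, c⁆ ^ (l - j).toNat = 1 := by
          have := zpow_natCast ⁅x, c⁆ (l - j).toNat
          rw [Int.toNat_of_nonneg (by omega)] at this
          rw [← this] at *; exact_mod_cast ‹⁅x, c⁆ ^ (l - j) = 1›
        exact tf _ _ (by omega) hnat
      · have hnat : ⁅x, c⁆ ^ (j - l).toNat = 1 := by
          have := zpow_natCast ⁅x, c⁆ (j - l).toNat
          rw [Int.toNat_of_nonneg (by omega)] at this
          rw [← this] at *; exact hpow1
        exact tf _ _ (by omega) hnat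
    have := commutatorElement_eq_one_iff_commute.mp hz1
    exact this
  have hccn : ∀ x : G, ∀ n : ℤ, x * c ^ n = c ^ n * x := fun x n =>
    Commute.zpow_right (hcc x) n
  refine ⟨fun g _ => hcc g, ?_, ?_⟩
  · intro _
    have h2 : b * a * c ^ l = a * b * c ^ j := by rw [h, mul_assoc, ← hccn b j, ← mul_assoc]
    have : a * b = b * a * c ^ l * (c ^ j)⁻¹ := eq_mul_inv_of_mul_eq h2.symm
    rw [this, zpow_sub]; group
  · intro _
    have h2 : b * a * c ^ l = a * b * c ^ j := by rw [h, mul_assoc, ← hccn b j, ← mul_assoc]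
    have : b * a = a * b * c ^ j * (c ^ l)⁻¹ := eq_mul_inv_of_mul_eq h2
    rw [this, zpow_sub]; group
end
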